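/- arXiv:math/0010261 — 3 statements merged into one kernel-verified Lean document; each statement's English description precedes it below -/
import Mathlib

section
/- Let X and Y be first-countable Tychonoff (completely regular Hausdorff) spaces and let E and F be nontrivial real normed vector spaces. If there exists a biseparating map T : C(X,E) → C(Y,F), then X and Y are homeomorphic. -/
set_option linter.unusedSectionVars false

open Set Function Topology Filter

noncomputable section

namespace BisepAux

variable {X Y E F : Type*}

/-- Open-ness of the cozero set of a continuous map into a normed group. -/
lemma isOpen_supp [TopologicalSpace X] [NormedAddCommGroup E] (f : C(X, E)) :
    IsOpen (support ⇑f) := by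
  have : support ⇑f = ⇑f ⁻¹' ({0}ᶜ) := by
    ext z; simp [Function.mem_support]
  rw [this]
  exact (isOpen_compl_singleton).preimage f.continuous

/-- Strong bump: in a T3.5 space, a point in an open set admits a continuous real
function equal to 1 on a neighborhood, with closure of support inside the open set. -/
lemma exists_bump [TopologicalSpace X] [T35Space X] {x : X} {U : Set X}
    (hU : IsOpen U) (hx : x ∈ U) :
    ∃ (φ : X → ℝ) (V : Set X), Continuous φ ∧ IsOpen V ∧ x ∈ V ∧
      (∀ z ∈ V, φ z = 1) ∧ closure (support φ) ⊆ U := by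
  obtain ⟨f, hfc, hf0, hf1⟩ :=
    CompletelyRegularSpace.completely_regular x Uᶜ hU.isClosed_compl (by simp [hx])
  have hfc' : Continuous fun z => (f z : ℝ) := continuous_subtype_val.comp hfc
  refine ⟨fun z => min 1 (max 0 (2 - 3 * (f z : ℝ))), {z | (f z : ℝ) < 1/3},
    (continuous_const.min (continuous_const.max (continuous_const.sub (continuous_const.mul hfc')))), isOpen_lt hfc' continuous_const, ?_, ?_, ?_⟩
  · show (f x : ℝ) < 1/3
    rw [hf0]; norm_num
  · intro z hz
    have hz' : (f z : ℝ) < 1/3 := hz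
    have h1 : (0:ℝ) ≤ 2 - 3 * (f z : ℝ) := by linarith
    have h2 : (1:ℝ) ≤ 2 - 3 * (f z : ℝ) := by linarith
    show min 1 (max 0 (2 - 3 * (f z : ℝ))) = 1
    rw [max_eq_right h1, min_eq_left h2]
  · have hsub : support (fun z => min 1 (max 0 (2 - 3 * (f z : ℝ)))) ⊆
        {z | (f z : ℝ) ≤ 2/3} := by
      intro z hz
      simp only [Function.mem_support] at hz
      simp only [mem_setOf_eq]
      by_contra hle
      push_neg at hle
      have h0 : (2 : ℝ) - 3 * (f z : ℝ) ≤ 0 := by linarith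
      rw [max_eq_left h0] at hz
      simp at hz
    have hcl : IsClosed {z | (f z : ℝ) ≤ 2/3} := isClosed_le hfc' continuous_const
    refine (closure_minimal hsub hcl).trans ?_
    intro z hz
    simp only [mem_setOf_eq] at hz
    by_contra hzU
    have h1 : f z = 1 := hf1 hzU
    rw [h1] at hz
    norm_num at hz

/-- A symmetric bundle of hypotheses for a biseparating pair of mutually inverse maps. -/
structure SepPair [TopologicalSpace X] [TopologicalSpace Y]
    [NormedAddCommGroup E] [NormedAddCommGroup F]
    (T : C(X, E) → C(Y, F)) (S : C(Y, F) → C(X, E)) : Prop where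
  st : ∀ f, S (T f) = f
  ts : ∀ g, T (S g) = g
  addT : ∀ f g, T (f + g) = T f + T g
  addS : ∀ f g, S (f + g) = S f + S g
  sepT : ∀ f g : C(X, E), (∀ x, f x = 0 ∨ g x = 0) → ∀ y, T f y = 0 ∨ T g y = 0
  sepS : ∀ f g : C(Y, F), (∀ y, f y = 0 ∨ g y = 0) → ∀ x, S f x = 0 ∨ S g x = 0

namespace SepPair

variable [TopologicalSpace X] [TopologicalSpace Y]
    [NormedAddCommGroup E] [NormedAddCommGroup F]
    {T : C(X, E) → C(Y, F)} {S : C(Y, F) → C(X, E)}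

protected lemma symm (hp : SepPair T S) : SepPair S T :=
  ⟨hp.ts, hp.st, hp.addS, hp.addT, hp.sepS, hp.sepT⟩

lemma T0 (hp : SepPair T S) : T 0 = 0 := by
  have h := hp.addT 0 0
  rw [add_zero] at h
  exact left_eq_add.mp h

lemma injT (hp : SepPair T S) : Function.Injective T := fun a b hab => by
  have := congrArg S hab
  rwa [hp.st, hp.st] at this

lemma nsmulT (hp : SepPair T S) (n : ℕ) (f : C(X, E)) : T (n • f) = n • T f := by
  let Th : C(X, E) →+ C(Y, F) := AddMonoidHom.mk' T hp.addT
  exact Th.map_nsmul n f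

lemma subT (hp : SepPair T S) (f g : C(X, E)) : T (f - g) = T f - T g := by
  let Th : C(X, E) →+ C(Y, F) := AddMonoidHom.mk' T hp.addT
  exact Th.map_sub f g

end SepPair

end BisepAux

namespace BisepAux

variable {X Y E F : Type*}
variable [TopologicalSpace X] [TopologicalSpace Y]
    [NormedAddCommGroup E] [NormedSpace ℝ E] [NormedAddCommGroup F] [NormedSpace ℝ F]
    {T : C(X, E) → C(Y, F)} {S : C(Y, F) → C(X, E)}

/-- Key localization lemma: if `h` has cozero set inside that of `S g`, then `T h`
has cozero set inside the closure of the cozero set of `g`. -/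
lemma SepPair.lemmaM [T35Space Y] (hp : SepPair T S) (h : C(X, E)) (g : C(Y, F))
    (hsub : support ⇑h ⊆ support ⇑(S g)) :
    support ⇑(T h) ⊆ closure (support ⇑g) := by
  intro y' hy'
  by_contra hcl
  obtain ⟨ψ, V, hψc, hVo, hyV, hψ1, hψs⟩ :=
    exists_bump (isOpen_compl_iff.mpr isClosed_closure)
      (by simpa using hcl : y' ∈ (closure (support ⇑g))ᶜ)
  set r : C(Y, F) := ⟨fun z => ψ z • T h z, hψc.smul (T h).continuous⟩ with hr
  have hdisj1 : ∀ z, r z = 0 ∨ g z = 0 := by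
    intro z
    by_cases hg : g z = 0
    · exact Or.inr hg
    · left
      have hz : z ∈ closure (support ⇑g) := subset_closure hg
      have : ψ z = 0 := by
        by_contra hψz
        exact (hψs (subset_closure hψz)) hz
      show ψ z • T h z = 0
      rw [this, zero_smul]
  have hdisj2 : ∀ x, S r x = 0 ∨ h x = 0 := by
    intro x
    rcases hp.sepS r g hdisj1 x with h1 | h2
    · exact Or.inl h1
    · right
      by_contra hh
      exact (hsub hh) h2
  have hdisj3 := hp.sepT (S r) h hdisj2
  rcases hdisj3 y' with h1 | h2
  · rw [hp.ts r] at h1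
    have : r y' = T h y' := by
      show ψ y' • T h y' = T h y'
      rw [hψ1 y' hyV, one_smul]
    rw [this] at h1
    exact hy' h1
  · exact hy' h2

end BisepAux

namespace BisepAux

variable {X Y E F : Type*}
variable [TopologicalSpace X] [TopologicalSpace Y]
    [NormedAddCommGroup E] [NormedSpace ℝ E] [NormedAddCommGroup F] [NormedSpace ℝ F]
    {T : C(X, E) → C(Y, F)} {S : C(Y, F) → C(X, E)}

/-- Uniqueness of support points. -/
lemma SepPair.unique [T35Space X] [Nontrivial F] (hp : SepPair T S) (y : Y) (x₁ x₂ : X)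
    (h1 : ∀ f : C(X, E), T f y ≠ 0 → x₁ ∈ closure (support ⇑f))
    (h2 : ∀ f : C(X, E), T f y ≠ 0 → x₂ ∈ closure (support ⇑f)) : x₁ = x₂ := by
  by_contra hne
  obtain ⟨e', he'⟩ := exists_ne (0 : F)
  set f : C(X, E) := S (ContinuousMap.const Y e') with hf
  have hTf : T f y = e' := by rw [hf, hp.ts]; rfl
  obtain ⟨φ, V, hφc, hVo, hxV, hφ1, hφs⟩ :=
    exists_bump isOpen_compl_singleton (by simpa using hne : x₁ ∈ ({x₂} : Set X)ᶜ)
  set u : C(X, E) := ⟨fun z => φ z • f z, hφc.smul f.continuous⟩ with hu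
  have hTu : T u y = 0 := by
    by_contra h
    have hmem := h2 u h
    have hsub : closure (support ⇑u) ⊆ ({x₂} : Set X)ᶜ := by
      refine (closure_mono ?_).trans hφs
      intro z hz
      have : φ z • f z ≠ 0 := hz
      intro hφz
      exact this (by rw [hφz, zero_smul])
    exact (hsub hmem) rfl
  have hTv : T (f - u) y = 0 := by
    by_contra h
    have hmem := h1 (f - u) h
    obtain ⟨z, hzV, hzs⟩ := mem_closure_iff.mp hmem V hVo hxV
    have : (f - u) z = 0 := by
      show f z - u z = 0
      have : u z = f z := by show φ z • f z = f z; rw [hφ1 z hzV, one_smul]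
      rw [this, sub_self]
    exact hzs this
  have hsum := hp.subT f u
  have : T f y = T u y + T (f - u) y := by rw [hsum]; simp
  rw [hTf, hTu, hTv] at this
  simp at this
  exact he' this

/-- The support point of `y` is in the closure of the cozero set of any `k` with
`S k` not vanishing at it. -/
lemma SepPair.mem_dual [T35Space Y] [Nontrivial F] (hp : SepPair T S) (y : Y) (x : X)
    (hx : ∀ f : C(X, E), T f y ≠ 0 → x ∈ closure (support ⇑f)) :
    ∀ k : C(Y, F), S k x ≠ 0 → y ∈ closure (support ⇑k) := by
  intro k hk
  by_contra hycl
  obtain ⟨e', he'⟩ := exists_ne (0 : F)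
  obtain ⟨ψ, V, hψc, hVo, hyV, hψ1, hψs⟩ :=
    exists_bump (isOpen_compl_iff.mpr isClosed_closure)
      (by simpa using hycl : y ∈ (closure (support ⇑k))ᶜ)
  set g : C(Y, F) := ⟨fun z => ψ z • e', hψc.smul continuous_const⟩ with hg
  have hdisj : ∀ z, g z = 0 ∨ k z = 0 := by
    intro z
    by_cases h : k z = 0
    · exact Or.inr h
    · left
      have hz : z ∈ closure (support ⇑k) := subset_closure h
      have : ψ z = 0 := by
        by_contra hψz
        exact (hψs (subset_closure hψz)) hz
      show ψ z • e' = 0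
      rw [this, zero_smul]
  have hd2 := hp.sepS g k hdisj
  have hTSg : T (S g) y ≠ 0 := by
    rw [hp.ts]
    show ψ y • e' ≠ 0
    rw [hψ1 y hyV, one_smul]
    exact he'
  have hxcl : x ∈ closure (support ⇑(S g)) := hx (S g) hTSg
  obtain ⟨x', hx'1, hx'2⟩ := mem_closure_iff.mp hxcl (support ⇑(S k)) (isOpen_supp _) hk
  rcases hd2 x' with h | h
  · exact hx'2 h
  · exact hx'1 h

/-- Continuity of the support map. -/
lemma SepPair.cont_support_map [T35Space X] [Nontrivial F] (hp : SepPair T S)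
    (σ : Y → X) (hσ : ∀ y (f : C(X, E)), T f y ≠ 0 → σ y ∈ closure (support ⇑f)) :
    Continuous σ := by
  rw [continuous_iff_continuousAt]
  intro y₀
  rw [ContinuousAt, tendsto_nhds]
  intro U hUo hU
  obtain ⟨e', he'⟩ := exists_ne (0 : F)
  set f₀ : C(X, E) := S (ContinuousMap.const Y e') with hf₀
  obtain ⟨φ, V, hφc, hVo, hxV, hφ1, hφs⟩ := exists_bump hUo hU
  set v : C(X, E) := ⟨fun z => φ z • f₀ z, hφc.smul f₀.continuous⟩ with hv
  have hTw : T (f₀ - v) y₀ = 0 := by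
    by_contra h
    have hmem := hσ y₀ (f₀ - v) h
    obtain ⟨z, hzV, hzs⟩ := mem_closure_iff.mp hmem V hVo hxV
    have : (f₀ - v) z = 0 := by
      show f₀ z - v z = 0
      have : v z = f₀ z := by show φ z • f₀ z = f₀ z; rw [hφ1 z hzV, one_smul]
      rw [this, sub_self]
    exact hzs this
  have hTv : T v y₀ ≠ 0 := by
    have hsum : T f₀ y₀ = T v y₀ + T (f₀ - v) y₀ := by rw [hp.subT]; simp
    have hTf₀ : T f₀ y₀ = e' := by rw [hf₀, hp.ts]; rfl
    rw [hTf₀, hTw, add_zero] at hsum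
    rw [← hsum]
    exact he'
  have hopen : IsOpen (support ⇑(T v)) := isOpen_supp _
  have hsub : support ⇑(T v) ⊆ σ ⁻¹' U := by
    intro y' hy'
    have := hσ y' v hy'
    have hsupp : support ⇑v ⊆ support φ := by
      intro z hz
      have : φ z • f₀ z ≠ 0 := hz
      intro hφz
      exact this (by rw [hφz, zero_smul])
    exact mem_preimage.mpr (hφs ((closure_mono hsupp) this))
  exact mem_nhds_iff.mpr ⟨support ⇑(T v), hsub, hopen, hTv⟩

end BisepAux

namespace BisepAux

variable {X Y E F : Type*}
variable [TopologicalSpace X] [TopologicalSpace Y]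
    [NormedAddCommGroup E] [NormedSpace ℝ E] [NormedAddCommGroup F] [NormedSpace ℝ F]
    {T : C(X, E) → C(Y, F)} {S : C(Y, F) → C(X, E)}

lemma coe_nsmul (n : ℕ) (f : C(X, E)) : ⇑(n • f) = n • ⇑f :=
  map_nsmul (ContinuousMap.coeFnAddMonoidHom : C(X, E) →+ X → E) n f

/-- Existence of support points. -/
lemma SepPair.exists_support [T35Space X] [T35Space Y] [FirstCountableTopology Y]
    [Nontrivial E] [Nontrivial F] (hp : SepPair T S) (y : Y) :
    ∃ x : X, ∀ f : C(X, E), T f y ≠ 0 → x ∈ closure (support ⇑f) := by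
  obtain ⟨e, he⟩ := exists_ne (0 : E)
  obtain ⟨e', he'⟩ := exists_ne (0 : F)
  obtain ⟨B, hB⟩ := (𝓝 y).exists_antitone_basis
  set W : ℕ → Set Y := fun k => interior (B k) with hW
  have hWo : ∀ k, IsOpen (W k) := fun _ => isOpen_interior
  have hyW : ∀ k, y ∈ W k := fun k => mem_interior_iff_mem_nhds.mpr (hB.mem k)
  have hbump : ∀ k : ℕ, ∃ φ : Y → ℝ, Continuous φ ∧ φ y = 1 ∧ closure (support φ) ⊆ W k := by
    intro k
    obtain ⟨φ, V, hc, hVo, hyV, h1, hs⟩ := exists_bump (hWo k) (hyW k)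
    exact ⟨φ, hc, h1 y hyV, hs⟩
  choose κ hκc hκ1 hκs using hbump
  set lam : ℕ → Y → ℝ := fun k z => ∏ j ∈ Finset.range (k+1), κ j z with hlam
  have hlamc : ∀ k, Continuous (lam k) := fun k =>
    continuous_finset_prod _ (fun j _ => hκc j)
  have hlam1 : ∀ k, lam k y = 1 := fun k =>
    Finset.prod_eq_one (fun j _ => hκ1 j)
  have hlam_mono : ∀ {k m : ℕ}, k ≤ m → ∀ z, lam m z ≠ 0 → lam k z ≠ 0 := by
    intro k m hkm z hz
    rw [Finset.prod_ne_zero_iff] at hz ⊢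
    intro j hj
    exact hz j (Finset.mem_range.mpr (lt_of_lt_of_le (Finset.mem_range.mp hj) (by omega)))
  have hlamκ : ∀ k z, lam k z ≠ 0 → κ k z ≠ 0 := by
    intro k z hz
    rw [Finset.prod_ne_zero_iff] at hz
    exact hz k (Finset.mem_range.mpr (by omega))
  set g : ℕ → C(Y, F) := fun k => ⟨fun z => lam k z • e', (hlamc k).smul continuous_const⟩
    with hgdef
  have hgy : ∀ k, g k y = e' := by
    intro k; show lam k y • e' = e'; rw [hlam1, one_smul]
  have hgsupp_mono : ∀ {k m : ℕ}, k ≤ m → support ⇑(g m) ⊆ support ⇑(g k) := by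
    intro k m hkm z hz
    have h1 : lam m z ≠ 0 := by
      intro h0
      exact hz (show lam m z • e' = 0 by rw [h0, zero_smul])
    have h2 := hlam_mono hkm z h1
    show lam k z • e' ≠ 0
    simp [h2, he']
  have hgW : ∀ k, closure (support ⇑(g k)) ⊆ W k := by
    intro k
    refine (closure_mono ?_).trans (hκs k)
    intro z hz
    have h1 : lam k z ≠ 0 := by
      intro h0
      exact hz (show lam k z • e' = 0 by rw [h0, zero_smul])
    exact hlamκ k z h1
  set u : ℕ → C(X, E) := fun k => S (g k) with hudef
  have hTu : ∀ k, T (u k) = g k := fun k => hp.ts (g k)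
  have hune : ∀ k, u k ≠ 0 := by
    intro k h
    have h1 : g k = 0 := by rw [← hTu k, h, hp.T0]
    have h2 : g k y = 0 := by rw [h1]; rfl
    rw [hgy k] at h2
    exact he' h2
  have nested : ∀ {k m : ℕ}, k ≤ m → support ⇑(u m) ⊆ closure (support ⇑(u k)) := by
    intro k m hkm
    have hsub : support ⇑(g m) ⊆ support ⇑(T (u k)) := by
      rw [hTu]; exact hgsupp_mono hkm
    exact hp.symm.lemmaM (g m) (u k) hsub
  -- Step 1 : the intersection of the closures of cozero sets of the `u k` is nonempty
  have hstep1 : (⋂ k, closure (support ⇑(u k))).Nonempty := by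
    by_contra hcon
    have hKex : ∀ x : X, ∃ k, x ∉ closure (support ⇑(u k)) := by
      intro x
      by_contra h
      push_neg at h
      exact hcon ⟨x, mem_iInter.mpr h⟩
    choose K hK using hKex
    have hpick : ∀ n : ℕ, ∃ x, u n x ≠ 0 := by
      intro n
      by_contra h
      push_neg at h
      exact hune n (ContinuousMap.ext fun x => by simpa using h x)
    choose pk hpk using hpick
    set step : ℕ × X → ℕ × X :=
      fun s => (max s.1 (K s.2) + 1, pk (max s.1 (K s.2) + 1)) with hstep
    set seq : ℕ → ℕ × X := fun k => step^[k] (0, pk 0) with hseqdef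
    set np : ℕ → ℕ := fun k => (seq k).1 with hnp
    set xp : ℕ → X := fun k => (seq k).2 with hxpdef
    have hseqS : ∀ k, seq (k+1) = step (seq k) := fun k =>
      Function.iterate_succ_apply' step k _
    have hxp : ∀ k, xp k = pk (np k) := by
      intro k
      cases k with
      | zero => rfl
      | succ k =>
          show (seq (k+1)).2 = pk (seq (k+1)).1
          rw [hseqS k]
    have hxne : ∀ k, u (np k) (xp k) ≠ 0 := fun k => by
      rw [hxp k]; exact hpk (np k)
    have hnpS : ∀ k, np (k+1) = max (np k) (K (xp k)) + 1 := by
      intro k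
      show (seq (k+1)).1 = _
      rw [hseqS k]
    have hlt : ∀ k, np k < np (k+1) := fun k => by
      rw [hnpS k]; exact Nat.lt_succ_of_le (le_max_left _ _)
    have hKlt : ∀ k, K (xp k) < np (k+1) := fun k => by
      rw [hnpS k]; exact Nat.lt_succ_of_le (le_max_right _ _)
    have hmono : StrictMono np := strictMono_nat_of_lt_succ hlt
    have hKlt' : ∀ j k, j < k → K (xp j) < np k := fun j k h =>
      lt_of_lt_of_le (hKlt j) (hmono.monotone (Nat.succ_le_of_lt h))
    have hk_le : ∀ k, k ≤ np k := fun k => hmono.le_apply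
    set G : ℕ → Set X :=
      fun k => (closure (support ⇑(u (K (xp k)))))ᶜ ∩ support ⇑(u (np k)) with hGdef
    have hGo : ∀ k, IsOpen (G k) := fun k =>
      (isOpen_compl_iff.mpr isClosed_closure).inter (isOpen_supp _)
    have hxG : ∀ k, xp k ∈ G k := fun k => ⟨hK (xp k), hxne k⟩
    have hGdisj : ∀ j k, j < k → ∀ z, z ∈ G j → z ∈ G k → False := by
      intro j k hjk z hzj hzk
      have h1 : support ⇑(u (np k)) ⊆ closure (support ⇑(u (K (xp j)))) :=
        nested (le_of_lt (hKlt' j k hjk))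
      exact hzj.1 (h1 hzk.2)
    have hGne : ∀ j k, j ≠ k → ∀ z, z ∈ G j → z ∈ G k → False := by
      intro j k hne z hzj hzk
      rcases hne.lt_or_gt with h | h
      · exact hGdisj j k h z hzj hzk
      · exact hGdisj k j h z hzk hzj
    have hGlf : LocallyFinite G := by
      intro x
      refine ⟨(closure (support ⇑(u (K x))))ᶜ,
        (isOpen_compl_iff.mpr isClosed_closure).mem_nhds (hK x), ?_⟩
      refine (Set.finite_lt_nat (K x)).subset ?_
      intro k hk
      obtain ⟨z, hz1, hz2⟩ := hk
      simp only [mem_setOf_eq]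
      by_contra hge
      push_neg at hge
      have h1 : support ⇑(u (np k)) ⊆ closure (support ⇑(u (K x))) :=
        nested (le_trans hge (hk_le k))
      exact hz2 (h1 hz1.2)
    have hbump2 : ∀ k, ∃ φ : X → ℝ, Continuous φ ∧ φ (xp k) = 1 ∧
        closure (support φ) ⊆ G k := by
      intro k
      obtain ⟨φ, V, hc, hVo, hxV, h1, hs⟩ := exists_bump (hGo k) (hxG k)
      exact ⟨φ, hc, h1 _ hxV, hs⟩
    choose φ hφc hφ1 hφs using hbump2
    set p : ℕ → C(X, E) := fun k => ⟨fun z => φ k z • e, (hφc k).smul continuous_const⟩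
      with hpdef
    have hpsupp : ∀ k, support ⇑(p k) ⊆ G k := by
      intro k z hz
      have h1 : φ k z ≠ 0 := by
        intro h0
        exact hz (show φ k z • e = 0 by rw [h0, zero_smul])
      exact hφs k (subset_closure h1)
    have hTpne : ∀ k, ∃ z, T (p k) z ≠ 0 := by
      intro k
      have hpne : p k ≠ 0 := by
        intro h
        have h1 : p k (xp k) = 0 := by rw [h]; rfl
        have h2 : φ k (xp k) • e = 0 := h1
        rw [hφ1 k, one_smul] at h2
        exact he h2
      by_contra h
      push_neg at h
      exact hpne (hp.injT (show T (p k) = T 0 by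
        rw [hp.T0]; exact ContinuousMap.ext fun z => by simpa using h z))
    choose z hz using hTpne
    have hzg : ∀ k, z k ∈ closure (support ⇑(g (np k))) := by
      intro k
      have hsub : support ⇑(p k) ⊆ support ⇑(S (g (np k))) := fun w hw => (hpsupp k hw).2
      exact hp.lemmaM (p k) (g (np k)) hsub (hz k)
    have hzW : ∀ k, z k ∈ W (np k) := fun k => hgW (np k) (hzg k)
    have htz : Tendsto z atTop (𝓝 y) := by
      rw [tendsto_atTop']
      intro s hs
      obtain ⟨m, -, hm⟩ := hB.1.mem_iff.mp hs
      refine ⟨m, fun k hk => hm ?_⟩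
      exact hB.antitone (le_trans hk (hk_le k)) (interior_subset (hzW k))
    have hmk : ∀ k, ∃ m : ℕ, 1 ≤ (m : ℝ) * ‖T (p k) (z k)‖ := by
      intro k
      have hpos : 0 < ‖T (p k) (z k)‖ := norm_pos_iff.mpr (hz k)
      obtain ⟨m, hm⟩ := exists_nat_gt (1 / ‖T (p k) (z k)‖)
      exact ⟨m, le_of_lt ((div_lt_iff₀ hpos).mp hm)⟩
    choose mk hmk' using hmk
    set q : ℕ → C(X, E) := fun k => if Even k then mk k • p k else 0 with hqdef
    have hqp : ∀ k z', Even k → q k z' = mk k • p k z' := by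
      intro k z' hev
      show (if Even k then mk k • p k else 0) z' = _
      rw [if_pos hev, coe_nsmul]
      rfl
    have hqsupp : ∀ k, support ⇑(q k) ⊆ G k := by
      intro k z' hz'
      refine hpsupp k ?_
      have hne : (q k) z' ≠ 0 := hz'
      by_cases hev : Even k
      · rw [hqp k z' hev] at hne
        intro h0
        exact hne (by rw [h0, smul_zero])
      · exfalso
        apply hne
        show (if Even k then mk k • p k else 0) z' = 0
        rw [if_neg hev]
        rfl
    have hQc : Continuous fun x => ∑ᶠ k, q k x :=
      continuous_finsum (fun k => (q k).continuous) (hGlf.subset hqsupp)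
    set Q : C(X, E) := ⟨fun x => ∑ᶠ k, q k x, hQc⟩ with hQdef
    have hQeq : ∀ k z', p k z' ≠ 0 → Q z' = q k z' := by
      intro k z' hpz
      have hzG : z' ∈ G k := hpsupp k hpz
      show (∑ᶠ j, q j z') = q k z'
      refine finsum_eq_single (fun j => q j z') k ?_
      intro j hj
      by_contra hne
      exact hGne j k hj z' (hqsupp j hne) hzG
    -- odd indices : T Q vanishes at z k
    have hodd : ∀ k, ¬ Even k → T Q (z k) = 0 := by
      intro k hkodd
      have hd : ∀ x', Q x' = 0 ∨ p k x' = 0 := by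
        intro x'
        by_cases hpz : p k x' = 0
        · exact Or.inr hpz
        · left
          rw [hQeq k x' hpz]
          show (if Even k then mk k • p k else 0) x' = 0
          rw [if_neg hkodd]
          rfl
      rcases hp.sepT Q (p k) hd (z k) with h | h
      · exact h
      · exact absurd h (hz k)
    -- even indices : the norm of T Q at z k is at least 1
    have heven : ∀ k, Even k → 1 ≤ ‖T Q (z k)‖ := by
      intro k hkev
      set R : C(X, E) := Q - mk k • p k with hRdef
      have hd : ∀ x', R x' = 0 ∨ (mk k • p k) x' = 0 := by
        intro x'
        by_cases hpz : p k x' = 0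
        · right
          show (mk k • p k) x' = 0
          rw [coe_nsmul]
          show mk k • p k x' = 0
          rw [hpz, smul_zero]
        · left
          show Q x' - (mk k • p k) x' = 0
          rw [hQeq k x' hpz, hqp k x' hkev]
          rw [coe_nsmul]
          show mk k • p k x' - mk k • p k x' = 0
          rw [sub_self]
      have hTsm : T (mk k • p k) (z k) = mk k • T (p k) (z k) := by
        rw [hp.nsmulT, coe_nsmul]
        rfl
      have hTsm_ne : T (mk k • p k) (z k) ≠ 0 := by
        rw [hTsm]
        intro h0
        have h1 : ‖mk k • T (p k) (z k)‖ = 0 := by rw [h0, norm_zero]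
        rw [← Nat.cast_smul_eq_nsmul ℝ, norm_smul, Real.norm_natCast] at h1
        have := hmk' k
        rw [h1] at this
        norm_num at this
      have hTR : T R (z k) = 0 := by
        rcases hp.sepT R (mk k • p k) hd (z k) with h | h
        · exact h
        · exact absurd h hTsm_ne
      have hQR : Q = R + mk k • p k := by rw [hRdef, sub_add_cancel]
      have : T Q (z k) = T R (z k) + T (mk k • p k) (z k) := by
        rw [hQR, hp.addT]
        rfl
      rw [hTR, zero_add, hTsm] at this
      rw [this, ← Nat.cast_smul_eq_nsmul ℝ, norm_smul, Real.norm_natCast]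
      exact hmk' k
    -- contradiction via continuity of T Q at y
    have hx2 : Tendsto (fun i => z (2*i+1)) atTop (𝓝 y) :=
      htz.comp (tendsto_atTop_mono (fun i => by simp only [id_eq]; omega) tendsto_id)
    have hx3 : Tendsto (fun i => z (2*i)) atTop (𝓝 y) :=
      htz.comp (tendsto_atTop_mono (fun i => by simp only [id_eq]; omega) tendsto_id)
    have hTQy : T Q y = 0 := by
      have h1 : Tendsto (fun i => T Q (z (2*i+1))) atTop (𝓝 (T Q y)) :=
        ((T Q).continuous.tendsto y).comp hx2
      have h2 : (fun i => T Q (z (2*i+1))) = fun _ => (0 : F) := by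
        funext i
        exact hodd (2*i+1) (by simp [parity_simps])
      rw [h2] at h1
      exact (tendsto_nhds_unique tendsto_const_nhds h1).symm
    have h1 : Tendsto (fun i => ‖T Q (z (2*i))‖) atTop (𝓝 ‖T Q y‖) :=
      (continuous_norm.tendsto _).comp (((T Q).continuous.tendsto y).comp hx3)
    have h2 : 1 ≤ ‖T Q y‖ := ge_of_tendsto' h1 (fun i => heven (2*i) (by simp))
    rw [hTQy, norm_zero] at h2
    norm_num at h2
  -- Step 2 : any point of the intersection is a support point
  obtain ⟨x₀, hx₀⟩ := hstep1
  refine ⟨x₀, ?_⟩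
  intro f hf
  by_contra hxcl
  have hfo : IsOpen (support ⇑(T f)) := isOpen_supp _
  have hyf : y ∈ support ⇑(T f) := hf
  obtain ⟨i, -, hi⟩ := hB.1.mem_iff.mp (hfo.mem_nhds hyf)
  have hWi : closure (support ⇑(g i)) ⊆ support ⇑(T f) :=
    (hgW i).trans (interior_subset.trans hi)
  have hx₀i : x₀ ∈ closure (support ⇑(u i)) := by
    have := mem_iInter.mp hx₀ i
    exact this
  obtain ⟨w, hw1, hw2⟩ := mem_closure_iff.mp hx₀i ((closure (support ⇑f))ᶜ)
    (isOpen_compl_iff.mpr isClosed_closure) (by simpa using hxcl)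
  obtain ⟨φ', V', hφ'c, hV'o, hwV', hφ'1, hφ's⟩ :=
    exists_bump ((isOpen_compl_iff.mpr isClosed_closure).inter (isOpen_supp (u i)))
      (⟨hw1, hw2⟩ : w ∈ (closure (support ⇑f))ᶜ ∩ support ⇑(u i))
  set b : C(X, E) := ⟨fun z' => φ' z' • e, hφ'c.smul continuous_const⟩ with hbdef
  have hbsupp : support ⇑b ⊆ (closure (support ⇑f))ᶜ ∩ support ⇑(u i) := by
    intro z' hz'
    have h1 : φ' z' ≠ 0 := by
      intro h0
      exact hz' (show φ' z' • e = 0 by rw [h0, zero_smul])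
    exact hφ's (subset_closure h1)
  have hTb : support ⇑(T b) ⊆ closure (support ⇑(g i)) :=
    hp.lemmaM b (g i) (fun z' hz' => (hbsupp hz').2)
  have hTb2 : support ⇑(T b) ⊆ support ⇑(T f) := hTb.trans hWi
  have hb2 : support ⇑(S (T b)) ⊆ closure (support ⇑f) := by
    exact hp.symm.lemmaM (T b) f hTb2
  rw [hp.st] at hb2
  have hbw : b w ≠ 0 := by
    show φ' w • e ≠ 0
    rw [hφ'1 w hwV', one_smul]
    exact he
  exact (hbsupp hbw).1 (hb2 hbw)

end BisepAux

open BisepAux in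
/-- If `X`, `Y` are first-countable Tychonoff spaces, `E`, `F` nontrivial real
normed spaces, and there exists a biseparating map `T : C(X,E) → C(Y,F)`, then `X` and `Y`
are homeomorphic. -/
theorem stmt_3 {X Y E F : Type*}
    [TopologicalSpace X] [T35Space X] [FirstCountableTopology X]
    [TopologicalSpace Y] [T35Space Y] [FirstCountableTopology Y]
    [NormedAddCommGroup E] [NormedSpace ℝ E] [Nontrivial E]
    [NormedAddCommGroup F] [NormedSpace ℝ F] [Nontrivial F]
    (T : C(X, E) → C(Y, F))
    (hbij : Function.Bijective T)
    (hadd : ∀ f g : C(X, E), T (f + g) = T f + T g)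
    (hsep : ∀ f g : C(X, E), (∀ x, ‖f x‖ * ‖g x‖ = 0) → ∀ y, ‖T f y‖ * ‖T g y‖ = 0)
    (hsep' : ∀ f g : C(X, E), (∀ y, ‖T f y‖ * ‖T g y‖ = 0) → ∀ x, ‖f x‖ * ‖g x‖ = 0) :
    Nonempty (X ≃ₜ Y) := by
  classical
  set TE := Equiv.ofBijective T hbij with hTE
  set S : C(Y, F) → C(X, E) := fun g => TE.symm g with hS
  have hst : ∀ f, S (T f) = f := fun f => TE.symm_apply_apply f
  have hts : ∀ g, T (S g) = g := fun g => TE.apply_symm_apply g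
  have hadds : ∀ a b, S (a + b) = S a + S b := by
    intro a b
    apply hbij.injective
    rw [hadd, hts, hts, hts]
  have hmulnorm : ∀ (v w : F), ‖v‖ * ‖w‖ = 0 ↔ (v = 0 ∨ w = 0) := by
    intro v w
    rw [mul_eq_zero, norm_eq_zero, norm_eq_zero]
  have hmulnorm' : ∀ (v w : E), ‖v‖ * ‖w‖ = 0 ↔ (v = 0 ∨ w = 0) := by
    intro v w
    rw [mul_eq_zero, norm_eq_zero, norm_eq_zero]
  have hsepT : ∀ f g : C(X, E), (∀ x, f x = 0 ∨ g x = 0) → ∀ y, T f y = 0 ∨ T g y = 0 := by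
    intro f g h y
    exact (hmulnorm _ _).mp (hsep f g (fun x => (hmulnorm' _ _).mpr (h x)) y)
  have hsepS : ∀ f g : C(Y, F), (∀ y, f y = 0 ∨ g y = 0) → ∀ x, S f x = 0 ∨ S g x = 0 := by
    intro f g h x
    refine (hmulnorm' _ _).mp (hsep' (S f) (S g) (fun y => ?_) x)
    rw [hts, hts]
    exact (hmulnorm _ _).mpr (h y)
  have hp : SepPair T S := ⟨hst, hts, hadd, hadds, hsepT, hsepS⟩
  choose σ hσ using fun y => hp.exists_support y
  choose τ hτ using fun x => hp.symm.exists_support x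
  have hτσ : ∀ y, τ (σ y) = y :=
    fun y => hp.symm.unique (σ y) (τ (σ y)) y (hτ (σ y)) (hp.mem_dual y (σ y) (hσ y))
  have hστ : ∀ x, σ (τ x) = x :=
    fun x => hp.unique (τ x) (σ (τ x)) x (hσ (τ x)) (hp.symm.mem_dual x (τ x) (hτ x))
  exact ⟨{ toFun := τ, invFun := σ, left_inv := hστ, right_inv := hτσ,
           continuous_toFun := hp.symm.cont_support_map τ hτ,
           continuous_invFun := hp.cont_support_map σ hσ }⟩
end
end

section
/- Let X and Y be complete metric spaces and let E and F be nontrivial real normed vector spaces. Let C*_u(X,E) denote the space of bounded uniformly continuous functions from X to E, and C*_u(Y,F) the space of bounded uniformly continuous functions from Y to F. If there exists a biseparating map T : C*_u(X,E) → C*_u(Y,F), then X and Y are uniformly homeomorphic: there exists a homeomorphism h : Y → X such that both h and h⁻¹ are uniformly continuous. -/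
open scoped BoundedContinuousFunction

/-- The space `C*ᵤ(X,E)` of bounded uniformly continuous functions from `X` to `E`,
realized as the subtype of bounded continuous functions that are uniformly continuous. -/
def CuSpace (X E : Type*) [MetricSpace X] [NormedAddCommGroup E] : Type _ :=
  {f : X →ᵇ E // UniformContinuous f}

noncomputable instance {X E : Type*} [MetricSpace X] [NormedAddCommGroup E] :
    Add (CuSpace X E) :=
  ⟨fun f g => ⟨f.1 + g.1, by
    have : ⇑(f.1 + g.1) = fun x => f.1 x + g.1 x := rfl
    rw [this]
    exact f.2.add g.2⟩⟩

set_option linter.unusedSectionVars false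
namespace Stmt6

open Metric Set

variable {X E : Type*} [MetricSpace X] [NormedAddCommGroup E] [NormedSpace ℝ E]

lemma cu_ext {f g : CuSpace X E} (h : ∀ x, f.1 x = g.1 x) : f = g :=
  Subtype.ext (BoundedContinuousFunction.ext h)

lemma cu_add_apply (f g : CuSpace X E) (x : X) : (f + g).1 x = f.1 x + g.1 x := rfl

/-- constructor -/
noncomputable def mk' (f : X → E) (C : ℝ) (hC : ∀ x, ‖f x‖ ≤ C)
    (huc : UniformContinuous f) : CuSpace X E :=
  ⟨BoundedContinuousFunction.ofNormedAddCommGroup f huc.continuous C hC, by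
    have : ⇑(BoundedContinuousFunction.ofNormedAddCommGroup f huc.continuous C hC) = f := rfl
    rw [this]; exact huc⟩

@[simp] lemma mk'_apply (f : X → E) (C hC huc) (x : X) : (mk' f C hC huc).1 x = f x := rfl

/-- clamp to [0,1] -/
def clamp (t : ℝ) : ℝ := max 0 (min 1 t)

lemma clamp_nonneg (t : ℝ) : 0 ≤ clamp t := le_max_left _ _
lemma clamp_le_one (t : ℝ) : clamp t ≤ 1 := max_le (by norm_num) (min_le_left _ _)
lemma clamp_of_le (t : ℝ) (h : t ≤ 0) : clamp t = 0 := by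
  simp only [clamp, max_eq_left_iff]; exact (min_le_right _ _).trans h
lemma clamp_of_ge (t : ℝ) (h : 1 ≤ t) : clamp t = 1 := by
  simp only [clamp, min_eq_left h]; norm_num

lemma clamp_lip (a b : ℝ) : |clamp a - clamp b| ≤ |a - b| := by
  unfold clamp
  rcases le_total a b with h | h
  · have h1 : clamp a ≤ clamp b := by
      unfold clamp; exact max_le_max le_rfl (min_le_min le_rfl h)
    unfold clamp at h1
    rw [abs_of_nonpos (by linarith), abs_of_nonpos (by linarith)]
    have : max 0 (min 1 b) ≤ max 0 (min 1 a) + (b - a) := by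
      rcases le_total (min 1 b) 0 with hb | hb
      · rw [max_eq_left hb]; nlinarith [le_max_left (0:ℝ) (min 1 a)]
      · rw [max_eq_right hb]
        have : min 1 b ≤ min 1 a + (b - a) := by
          rcases le_total 1 a with h1a | h1a
          · rw [min_eq_left h1a, min_eq_left (by linarith)]; linarith
          · rw [min_eq_right h1a]
            exact (min_le_right _ _).trans (by linarith)
        exact this.trans (by nlinarith [le_max_right (0:ℝ) (min 1 a)])
    linarith
  · have h1 : clamp b ≤ clamp a := by
      unfold clamp; exact max_le_max le_rfl (min_le_min le_rfl h)
    unfold clamp at h1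
    rw [abs_of_nonneg (by linarith), abs_of_nonneg (by linarith)]
    have : max 0 (min 1 a) ≤ max 0 (min 1 b) + (a - b) := by
      rcases le_total (min 1 a) 0 with hb | hb
      · rw [max_eq_left hb]; nlinarith [le_max_left (0:ℝ) (min 1 b)]
      · rw [max_eq_right hb]
        have : min 1 a ≤ min 1 b + (a - b) := by
          rcases le_total 1 b with h1a | h1a
          · rw [min_eq_left h1a, min_eq_left (by linarith)]; linarith
          · rw [min_eq_right h1a]
            exact (min_le_right _ _).trans (by linarith)
        exact this.trans (by nlinarith [le_max_right (0:ℝ) (min 1 b)])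
    linarith

/-- cut function: equals 1 when `infDist x A ≤ r`, 0 when `infDist x A ≥ R` -/
noncomputable def cf (A : Set X) (r R : ℝ) (x : X) : ℝ :=
  clamp ((R - Metric.infDist x A) / (R - r))

lemma cf_nonneg (A : Set X) (r R : ℝ) (x : X) : 0 ≤ cf A r R x := clamp_nonneg _
lemma cf_le_one (A : Set X) (r R : ℝ) (x : X) : cf A r R x ≤ 1 := clamp_le_one _

lemma cf_eq_one {A : Set X} {r R : ℝ} (hr : r < R) {x : X}
    (h : Metric.infDist x A ≤ r) : cf A r R x = 1 := by
  apply clamp_of_ge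
  rw [le_div_iff₀ (by linarith)]
  linarith

lemma cf_eq_zero {A : Set X} {r R : ℝ} (hr : r < R) {x : X}
    (h : R ≤ Metric.infDist x A) : cf A r R x = 0 := by
  apply clamp_of_le
  apply div_nonpos_of_nonpos_of_nonneg <;> linarith

lemma cf_dist_le {A : Set X} {r R : ℝ} (hr : r < R) (x y : X) :
    |cf A r R x - cf A r R y| ≤ dist x y / (R - r) := by
  refine (clamp_lip _ _).trans ?_
  rw [div_sub_div_same, abs_div, abs_of_pos (by linarith : (0:ℝ) < R - r),
    div_le_div_iff_of_pos_right (by linarith)]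
  have h1 := Metric.infDist_le_infDist_add_dist (x := x) (y := y) (s := A)
  have h2 := Metric.infDist_le_infDist_add_dist (x := y) (y := x) (s := A)
  rw [dist_comm y x] at h2
  rw [abs_le]
  constructor
  · simp only [sub_sub_sub_cancel_left]; linarith
  · simp only [sub_sub_sub_cancel_left]; linarith

lemma uc_cf {A : Set X} {r R : ℝ} (hr : r < R) : UniformContinuous (cf A r R) := by
  rw [Metric.uniformContinuous_iff]
  intro ε hε
  refine ⟨ε * (R - r), mul_pos hε (by linarith), fun {x y} hxy => ?_⟩
  have := cf_dist_le (A := A) hr x y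
  rw [Real.dist_eq]
  calc |cf A r R x - cf A r R y| ≤ dist x y / (R - r) := this
    _ < ε := by rw [div_lt_iff₀ (by linarith)]; linarith

lemma uc_smul {c : X → ℝ} (hc : UniformContinuous c) (hc1 : ∀ x, |c x| ≤ 1)
    {u : X → E} (huc : UniformContinuous u) (M : ℝ) (hM : ∀ x, ‖u x‖ ≤ M) :
    UniformContinuous fun x => c x • u x := by
  rcases isEmpty_or_nonempty X with h | ⟨⟨x₀⟩⟩
  · rw [Metric.uniformContinuous_iff]
    exact fun ε hε => ⟨1, one_pos, fun {x y} _ => (IsEmpty.false x).elim⟩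
  have hM0 : (0:ℝ) ≤ M := (norm_nonneg (u x₀)).trans (hM x₀)
  rw [Metric.uniformContinuous_iff] at *
  intro ε hε
  obtain ⟨δ₁, hδ₁, H₁⟩ := hc (ε / (4 * (M + 1))) (by positivity)
  obtain ⟨δ₂, hδ₂, H₂⟩ := huc (ε / 4) (by linarith)
  refine ⟨min δ₁ δ₂, lt_min hδ₁ hδ₂, fun {x y} hxy => ?_⟩
  have h1 := H₁ (lt_of_lt_of_le hxy (min_le_left _ _))
  have h2 := H₂ (lt_of_lt_of_le hxy (min_le_right _ _))
  rw [dist_eq_norm] at h2 ⊢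
  rw [Real.dist_eq] at h1
  have key : c x • u x - c y • u y = (c x - c y) • u x + c y • (u x - u y) := by
    simp [sub_smul, smul_sub]
  rw [key]
  have harith : (ε / (4 * (M + 1))) * (M + 1) = ε / 4 := by field_simp
  calc ‖(c x - c y) • u x + c y • (u x - u y)‖
      ≤ ‖(c x - c y) • u x‖ + ‖c y • (u x - u y)‖ := norm_add_le _ _
    _ = |c x - c y| * ‖u x‖ + |c y| * ‖u x - u y‖ := by
        rw [norm_smul, norm_smul, Real.norm_eq_abs, Real.norm_eq_abs]
    _ ≤ (ε / (4 * (M + 1))) * (M + 1) + 1 * (ε / 4) := by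
        apply add_le_add
        · apply mul_le_mul h1.le ((hM x).trans (by linarith)) (norm_nonneg _)
            (by positivity)
        · apply mul_le_mul (hc1 y) h2.le (norm_nonneg _) zero_le_one
    _ < ε := by rw [harith]; linarith

/-- `cf A r R • e` as an element of `CuSpace` -/
noncomputable def cutE (A : Set X) (r R : ℝ) (hr : r < R) (e : E) : CuSpace X E :=
  mk' (fun x => cf A r R x • e) ‖e‖
    (fun x => by
      rw [norm_smul, Real.norm_eq_abs, abs_of_nonneg (cf_nonneg A r R x)]
      nlinarith [cf_le_one A r R x, cf_nonneg A r R x, norm_nonneg e])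
    (by
      have : UniformContinuous (cf A r R) := uc_cf hr
      rw [Metric.uniformContinuous_iff] at this ⊢
      intro ε hε
      rcases eq_or_ne e 0 with rfl | he
      · exact ⟨1, one_pos, fun {x y} _ => by simpa [dist_eq_norm] using hε⟩
      · have hep : (0:ℝ) < ‖e‖ := norm_pos_iff.mpr he
        obtain ⟨δ, hδ, H⟩ := this (ε / ‖e‖) (div_pos hε hep)
        refine ⟨δ, hδ, fun {x y} hxy => ?_⟩
        have := H hxy
        rw [dist_eq_norm, ← sub_smul, norm_smul, Real.norm_eq_abs]
        rw [Real.dist_eq] at this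
        calc |cf A r R x - cf A r R y| * ‖e‖ < (ε / ‖e‖) * ‖e‖ := by
              apply mul_lt_mul_of_pos_right this hep
          _ = ε := div_mul_cancel₀ _ (ne_of_gt hep))

@[simp] lemma cutE_apply (A : Set X) (r R : ℝ) (hr : r < R) (e : E) (x : X) :
    (cutE A r R hr e).1 x = cf A r R x • e := rfl

/-- multiply a CuSpace element by the scalar cut function -/
noncomputable def cmul (A : Set X) (r R : ℝ) (hr : r < R) (u : CuSpace X E) : CuSpace X E :=
  mk' (fun x => cf A r R x • u.1 x) ‖u.1‖
    (fun x => by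
      rw [norm_smul, Real.norm_eq_abs, abs_of_nonneg (cf_nonneg A r R x)]
      nlinarith [cf_le_one A r R x, cf_nonneg A r R x, u.1.norm_coe_le_norm x,
        norm_nonneg (u.1 x)])
    (uc_smul (uc_cf hr)
      (fun x => by rw [abs_of_nonneg (cf_nonneg A r R x)]; exact cf_le_one A r R x)
      u.2 ‖u.1‖ (fun x => u.1.norm_coe_le_norm x))

/-- multiply by the complementary cut -/
noncomputable def cmulc (A : Set X) (r R : ℝ) (hr : r < R) (u : CuSpace X E) : CuSpace X E :=
  mk' (fun x => (1 - cf A r R x) • u.1 x) ‖u.1‖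
    (fun x => by
      rw [norm_smul, Real.norm_eq_abs, abs_of_nonneg (by nlinarith [cf_le_one A r R x])]
      nlinarith [cf_le_one A r R x, cf_nonneg A r R x, u.1.norm_coe_le_norm x,
        norm_nonneg (u.1 x)])
    (by
      have h1 : UniformContinuous (fun x => 1 - cf A r R x) := by
        have := uc_cf (A := A) hr
        rw [Metric.uniformContinuous_iff] at this ⊢
        intro ε hε
        obtain ⟨δ, hδ, H⟩ := this ε hε
        refine ⟨δ, hδ, fun {x y} hxy => ?_⟩
        have := H hxy
        rw [Real.dist_eq] at this ⊢
        have e1 : (1 - cf A r R x) - (1 - cf A r R y) = -(cf A r R x - cf A r R y) := by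
          ring
        rw [e1, abs_neg]; exact this
      refine uc_smul h1 (fun x => ?_) u.2 ‖u.1‖ (fun x => u.1.norm_coe_le_norm x)
      rw [abs_of_nonneg (by nlinarith [cf_le_one A r R x])]
      nlinarith [cf_nonneg A r R x])

lemma cmul_split (A : Set X) (r R : ℝ) (hr : r < R) (u : CuSpace X E) :
    u = cmul A r R hr u + cmulc A r R hr u := by
  apply cu_ext
  intro x
  rw [cu_add_apply]
  show u.1 x = cf A r R x • u.1 x + (1 - cf A r R x) • u.1 x
  rw [← add_smul]; simp

section Seq
variable {Z : Type*} [MetricSpace Z]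

lemma extract_mono (Q : ℕ → ℕ → Prop)
    (H : ∀ F : Finset ℕ, ∃ m, (∀ i ∈ F, i < m) ∧ ∀ i ∈ F, Q i m) :
    ∃ φ : ℕ → ℕ, StrictMono φ ∧ ∀ n m, n < m → Q (φ n) (φ m) := by
  choose nxt h1 h2 using H
  let F : ℕ → Finset ℕ := fun n => Nat.rec ∅ (fun _ Fk => insert (nxt Fk) Fk) n
  let φ : ℕ → ℕ := fun n => nxt (F n)
  have hmem : ∀ n m, n < m → φ n ∈ F m := by
    intro n m h
    induction m with
    | zero => omega
    | succ k ih =>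
      show φ n ∈ insert (φ k) (F k)
      rcases Nat.lt_succ_iff_lt_or_eq.mp h with h' | h'
      · exact Finset.mem_insert_of_mem (ih h')
      · rw [h']; exact Finset.mem_insert_self _ _
  exact ⟨φ, fun n m h => h1 _ _ (hmem n m h), fun n m h => h2 _ _ (hmem n m h)⟩

/-- Any sequence in a complete metric space has a convergent subsequence or a
uniformly separated subsequence. -/
lemma seq_dichotomy [CompleteSpace Z] (x : ℕ → Z) :
    (∃ p : Z, ∃ φ : ℕ → ℕ, StrictMono φ ∧
      Filter.Tendsto (fun n => x (φ n)) Filter.atTop (nhds p)) ∨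
    (∃ θ > (0:ℝ), ∃ φ : ℕ → ℕ, StrictMono φ ∧
      ∀ i j, i ≠ j → θ ≤ dist (x (φ i)) (x (φ j))) := by
  by_cases hTB : TotallyBounded (Set.range x)
  · left
    have hK : IsCompact (closure (Set.range x)) :=
      TotallyBounded.isCompact_of_isClosed hTB.closure isClosed_closure
    obtain ⟨p, _, φ, hφ, hconv⟩ :=
      hK.tendsto_subseq (x := x) (fun n => subset_closure (Set.mem_range_self n))
    exact ⟨p, φ, hφ, hconv⟩
  · right
    rw [Metric.totallyBounded_iff] at hTB
    push_neg at hTB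
    obtain ⟨ε, hε, hbad⟩ := hTB
    refine ⟨ε, hε, ?_⟩
    have H : ∀ F : Finset ℕ, ∃ m, (∀ i ∈ F, i < m) ∧
        ∀ i ∈ F, ε ≤ dist (x i) (x m) := by
      intro F
      set N := F.sup id with hN
      have hfin : (Set.Finite (x '' {i | i ≤ N})) :=
        (Set.finite_Iic N).image x
      obtain ⟨z, hz⟩ := Set.not_subset.mp (hbad _ hfin)
      obtain ⟨m, rfl⟩ := hz.1
      have hm : ¬ m ≤ N := by
        intro hle
        apply hz.2
        refine Set.mem_biUnion (s := x '' {i | i ≤ N}) (t := fun y => Metric.ball y ε)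
          (Set.mem_image_of_mem x (show m ∈ {i | i ≤ N} from hle)) ?_
        simpa using hε
      refine ⟨m, fun i hi => ?_, fun i hi => ?_⟩
      · have : i ≤ N := Finset.le_sup (f := id) hi
        omega
      · have hiN : i ≤ N := Finset.le_sup (f := id) hi
        by_contra hlt
        push_neg at hlt
        apply hz.2
        refine Set.mem_biUnion (s := x '' {i | i ≤ N}) (t := fun y => Metric.ball y ε)
          (Set.mem_image_of_mem x (show i ∈ {i | i ≤ N} from hiN)) ?_
        rw [Metric.mem_ball, dist_comm]
        exact hlt
    obtain ⟨φ, hφ, hQ⟩ := extract_mono _ H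
    refine ⟨φ, hφ, fun i j hij => ?_⟩
    rcases lt_or_gt_of_ne hij with h | h
    · exact hQ i j h
    · rw [dist_comm]; exact hQ j i h

/-- thinning to get cross-separation between two separated families -/
lemma cross_thin (a b : ℕ → Z) (α : ℝ)
    (ha : ∀ i j, i ≠ j → α ≤ dist (a i) (a j))
    (hb : ∀ i j, i ≠ j → α ≤ dist (b i) (b j)) :
    ∃ φ : ℕ → ℕ, StrictMono φ ∧
      ∀ i j, i ≠ j → α/2 ≤ dist (a (φ i)) (b (φ j)) := by
  have H : ∀ F : Finset ℕ, ∃ m, (∀ i ∈ F, i < m) ∧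
      ∀ i ∈ F, α/2 ≤ dist (a m) (b i) ∧ α/2 ≤ dist (a i) (b m) := by
    intro F
    have hsub1 : ∀ i : ℕ, Set.Subsingleton {m : ℕ | dist (a m) (b i) < α/2} := by
      intro i m hm m' hm'
      by_contra hne
      have := ha m m' hne
      have := dist_triangle (a m) (b i) (a m')
      rw [dist_comm (b i) (a m')] at this
      simp only [Set.mem_setOf_eq] at hm hm'
      linarith
    have hsub2 : ∀ i : ℕ, Set.Subsingleton {m : ℕ | dist (a i) (b m) < α/2} := by
      intro i m hm m' hm'
      by_contra hne
      have := hb m m' hne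
      have := dist_triangle (b m) (a i) (b m')
      rw [dist_comm (b m) (a i)] at this
      simp only [Set.mem_setOf_eq] at hm hm'
      linarith
    have hBad : (⋃ i ∈ (F : Set ℕ), ({m : ℕ | dist (a m) (b i) < α/2} ∪
        {m : ℕ | dist (a i) (b m) < α/2})).Finite := by
      apply Set.Finite.biUnion F.finite_toSet
      intro i _
      exact ((hsub1 i).finite).union ((hsub2 i).finite)
    have hfin : (↑F ∪ (⋃ i ∈ (F : Set ℕ), ({m : ℕ | dist (a m) (b i) < α/2} ∪
        {m : ℕ | dist (a i) (b m) < α/2}))).Finite := F.finite_toSet.union hBad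
    obtain ⟨N, hN⟩ := hfin.bddAbove
    refine ⟨N + 1, fun i hi => ?_, fun i hi => ?_⟩
    · have : i ≤ N := hN (Set.mem_union_left _ (by exact_mod_cast hi))
      omega
    · have hnot : (N+1) ∉ (⋃ i ∈ (F : Set ℕ), ({m : ℕ | dist (a m) (b i) < α/2} ∪
          {m : ℕ | dist (a i) (b m) < α/2})) := by
        intro hmem
        have : N + 1 ≤ N := hN (Set.mem_union_right _ hmem)
        omega
      constructor
      · by_contra h
        push_neg at h
        exact hnot (Set.mem_biUnion (by exact_mod_cast hi)
          (Set.mem_union_left _ (by simpa using h)))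
      · by_contra h
        push_neg at h
        exact hnot (Set.mem_biUnion (by exact_mod_cast hi)
          (Set.mem_union_right _ (by simpa using h)))
  obtain ⟨φ, hφ, hQ⟩ := extract_mono _ H
  refine ⟨φ, hφ, fun i j hij => ?_⟩
  rcases lt_or_gt_of_ne hij with h | h
  · exact (hQ i j h).2
  · exact (hQ j i h).1

end Seq

/-- disjointness of cozero sets -/
def Disj (f g : CuSpace X E) : Prop := ∀ x, f.1 x = 0 ∨ g.1 x = 0


/-- bump function at a point: equals `e` on `ball a (r/2)`, vanishes outside `ball a r` -/
noncomputable def bump (a : X) (r : ℝ) (hr : 0 < r) (e : E) : CuSpace X E :=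
  cutE {a} (r/2) r (by linarith) e

lemma bump_eq_e {a : X} {r : ℝ} (hr : 0 < r) (e : E) {x : X} (h : dist x a ≤ r/2) :
    (bump a r hr e).1 x = e := by
  show cf {a} (r/2) r x • e = e
  rw [cf_eq_one (by linarith) (by rwa [Metric.infDist_singleton]), one_smul]

lemma bump_self {a : X} {r : ℝ} (hr : 0 < r) (e : E) : (bump a r hr e).1 a = e :=
  bump_eq_e hr e (by rw [dist_self]; linarith)

lemma bump_zero {a : X} {r : ℝ} (hr : 0 < r) (e : E) {x : X} (h : r ≤ dist x a) :
    (bump a r hr e).1 x = 0 := by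
  show cf {a} (r/2) r x • e = 0
  rw [cf_eq_zero (by linarith) (by rwa [Metric.infDist_singleton]), zero_smul]

lemma bump_supp {a : X} {r : ℝ} (hr : 0 < r) (e : E) {x : X}
    (h : (bump a r hr e).1 x ≠ 0) : dist x a < r := by
  by_contra h'
  push_neg at h'
  exact h (bump_zero hr e h')

section Main

variable {X Y E F : Type*} [MetricSpace X] [MetricSpace Y]
  [NormedAddCommGroup E] [NormedSpace ℝ E] [NormedAddCommGroup F] [NormedSpace ℝ F]

/-- the bundle of hypotheses on a biseparating pair of mutually inverse maps -/
structure Good (T : CuSpace X E → CuSpace Y F) (S : CuSpace Y F → CuSpace X E) : Prop where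
  ST : ∀ f, S (T f) = f
  TS : ∀ p, T (S p) = p
  addT : ∀ f g, T (f + g) = T f + T g
  addS : ∀ p q, S (p + q) = S p + S q
  disjT : ∀ f g, Disj f g → Disj (T f) (T g)
  disjS : ∀ p q, Disj p q → Disj (S p) (S q)

variable {T : CuSpace X E → CuSpace Y F} {S : CuSpace Y F → CuSpace X E}

lemma Good.symm (hG : Good T S) : Good S T :=
  ⟨hG.TS, hG.ST, hG.addS, hG.addT, hG.disjS, hG.disjT⟩

lemma Good.nonzero_of_image (hG : Good T S) {g : CuSpace X E} {y : Y}
    (h : (T g).1 y ≠ 0) : ∃ x, g.1 x ≠ 0 := by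
  by_contra h'
  push_neg at h'
  have hd : Disj g g := fun x => Or.inl (h' x)
  rcases hG.disjT g g hd y with h0 | h0 <;> exact h h0

lemma Good.meet (hG : Good T S) {p : CuSpace X E} {q : CuSpace Y F}
    (h : ¬ Disj p (S q)) : ∃ y', (T p).1 y' ≠ 0 ∧ q.1 y' ≠ 0 := by
  by_contra h'
  push_neg at h'
  have hd : Disj (T p) q := by
    intro y'
    by_cases hc : (T p).1 y' = 0
    · exact Or.inl hc
    · exact Or.inr (h' y' hc)
  have := hG.disjS _ _ hd
  rw [hG.ST] at this
  exact h this

/-- essential functions have nonvanishing image near `y` -/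
lemma ess_nbhd {g : CuSpace X E} {y : Y} (h : (T g).1 y ≠ 0) :
    ∃ r > (0:ℝ), ∀ y', dist y' y < r → (T g).1 y' ≠ 0 := by
  have hopen : IsOpen ((fun y' => (T g).1 y') ⁻¹' ({0}ᶜ)) :=
    IsOpen.preimage (T g).1.continuous isOpen_compl_singleton
  obtain ⟨r, hr, hball⟩ := Metric.isOpen_iff.mp hopen y h
  exact ⟨r, hr, fun y' hy' => hball (Metric.mem_ball.mpr hy')⟩

variable [CompleteSpace X] [Nontrivial E] [Nontrivial F]

/-- KEY THEOREM: essential functions with arbitrarily small cozero set exist. -/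
theorem small_ess (hG : Good T S) (y : Y) (ε : ℝ) (hε : 0 < ε) :
    ∃ (g : CuSpace X E) (x₀ : X), (T g).1 y ≠ 0 ∧ ∀ x, g.1 x ≠ 0 → dist x x₀ < ε := by
  obtain ⟨e₁, he₁⟩ : ∃ e : E, e ≠ 0 := exists_ne 0
  obtain ⟨e₂, he₂⟩ : ∃ e : F, e ≠ 0 := exists_ne 0
  -- the pulled-back small bumps
  set q : ℕ → CuSpace Y F := fun n => bump y (1/(n+1)) (by positivity) e₂ with hq
  set u : ℕ → CuSpace X E := fun n => S (q n) with hu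
  have hTu : ∀ n, T (u n) = q n := fun n => hG.TS _
  have hTuy : ∀ n, (T (u n)).1 y ≠ 0 := by
    intro n
    rw [hTu n]
    rw [show (q n).1 y = e₂ from bump_self _ e₂]
    exact he₂
  have hux : ∀ n, ∃ x, (u n).1 x ≠ 0 := fun n => hG.nonzero_of_image (hTuy n)
  choose x hx using hux
  -- the meeting lemma
  have meet : ∀ (p : CuSpace X E) (n : ℕ), ¬ Disj p (u n) →
      ∃ y', (T p).1 y' ≠ 0 ∧ dist y' y < 1/(n+1) := by
    intro p n h
    obtain ⟨y', h1, h2⟩ := hG.meet (q := q n) h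
    exact ⟨y', h1, bump_supp _ e₂ h2⟩
  rcases seq_dichotomy x with ⟨xs, φ, hφ, hconv⟩ | ⟨θ, hθ, φ, hφ, hsepa⟩
  · -- convergent case: xs is in the closure of every essential cozero set
    have claimA : ∀ g : CuSpace X E, (T g).1 y ≠ 0 → ∀ δ > (0:ℝ),
        ∃ z, g.1 z ≠ 0 ∧ dist z xs < δ := by
      intro g hg δ hδ
      by_contra hA
      push_neg at hA
      -- bump at xs is disjoint from g
      have hdisj : Disj (bump xs δ hδ e₁) g := by
        intro z
        by_cases hz : g.1 z = 0
        · exact Or.inr hz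
        · left
          exact bump_zero hδ e₁ (hA z hz)
      have hTdisj := hG.disjT _ _ hdisj
      obtain ⟨r, hr, hball⟩ := ess_nbhd hg
      -- choose n with dist (x (φ n)) xs < δ/2 and 1/(φ n + 1) < r
      have h1 : ∀ᶠ n in Filter.atTop, dist (x (φ n)) xs < δ/2 := by
        have := Metric.tendsto_atTop.mp hconv (δ/2) (by linarith)
        obtain ⟨N, hN⟩ := this
        exact Filter.eventually_atTop.mpr ⟨N, fun n hn => hN n hn⟩
      obtain ⟨N₀, hN₀⟩ := exists_nat_gt (1/r)
      have h2 : ∀ᶠ n in Filter.atTop, 1/((φ n : ℝ)+1) < r := by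
        refine Filter.eventually_atTop.mpr ⟨N₀, fun n hn => ?_⟩
        have hφn : (N₀ : ℝ) ≤ (φ n : ℝ) := by
          exact_mod_cast (hn.trans (hφ.le_apply))
        rw [div_lt_iff₀ (by positivity)]
        have h1r : 1/r < (N₀ : ℝ) := hN₀
        rw [div_lt_iff₀ hr] at h1r
        nlinarith
      obtain ⟨n, hn1, hn2⟩ := (h1.and h2).exists
      -- bump at xs is not disjoint from u (φ n)
      have hnd : ¬ Disj (bump xs δ hδ e₁) (u (φ n)) := by
        intro hD
        rcases hD (x (φ n)) with h0 | h0
        · rw [bump_eq_e hδ e₁ (by linarith)] at h0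
          exact he₁ h0
        · exact hx (φ n) h0
      obtain ⟨y', hy'1, hy'2⟩ := meet _ _ hnd
      have := hball y' (hy'2.trans hn2)
      rcases hTdisj y' with h0 | h0
      · exact hy'1 h0
      · exact this h0
    -- now produce the small essential function
    have hsplit := cmul_split {xs} (ε/2) ε (by linarith) (u 0)
    have hTsum : T (u 0) = T (cmul {xs} (ε/2) ε (by linarith) (u 0)) +
        T (cmulc {xs} (ε/2) ε (by linarith) (u 0)) := by
      rw [← hG.addT, ← hsplit]
    by_cases hcase : (T (cmul {xs} (ε/2) ε (by linarith) (u 0))).1 y ≠ 0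
    · refine ⟨_, xs, hcase, fun z hz => ?_⟩
      by_contra hd
      push_neg at hd
      apply hz
      show cf {xs} (ε/2) ε z • (u 0).1 z = 0
      rw [cf_eq_zero (by linarith) (by rwa [Metric.infDist_singleton]), zero_smul]
    · push_neg at hcase
      have hg' : (T (cmulc {xs} (ε/2) ε (by linarith) (u 0))).1 y ≠ 0 := by
        intro h0
        apply hTuy 0
        have := congrArg (fun v => v.1 y) hTsum
        rw [this, cu_add_apply, hcase, h0, add_zero]
      obtain ⟨z, hz1, hz2⟩ := claimA _ hg' (ε/2) (by linarith)
      exfalso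
      apply hz1
      show (1 - cf {xs} (ε/2) ε z) • (u 0).1 z = 0
      rw [cf_eq_one (by linarith) (by rw [Metric.infDist_singleton]; linarith)]
      simp
  · -- separated case: derive a contradiction
    exfalso
    set a : ℕ → X := fun j => x (φ j) with ha
    -- p j = small bump at a j
    set p : ℕ → CuSpace X E := fun j => bump (a j) (θ/8) (by linarith) e₁ with hp
    have hmeet : ∀ j, ∃ y', (T (p j)).1 y' ≠ 0 ∧ dist y' y < 1/((φ j : ℝ)+1) := by
      intro j
      apply meet
      intro hD
      rcases hD (a j) with h0 | h0
      · rw [bump_eq_e (by linarith) e₁ (by rw [dist_self]; linarith)] at h0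
        exact he₁ h0
      · exact hx (φ j) h0
    choose y' hy'1 hy'2 using hmeet
    -- every essential function comes close to a j for large j
    have claimM : ∀ g : CuSpace X E, (T g).1 y ≠ 0 →
        ∃ J, ∀ j ≥ J, ∃ z, g.1 z ≠ 0 ∧ dist z (a j) < θ/8 := by
      intro g hg
      obtain ⟨r, hr, hball⟩ := ess_nbhd hg
      obtain ⟨N₀, hN₀⟩ := exists_nat_gt (1/r)
      refine ⟨N₀, fun j hj => ?_⟩
      by_contra hA
      push_neg at hA
      have hdisj : Disj g (p j) := by
        intro z
        by_cases hz : g.1 z = 0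
        · exact Or.inl hz
        · right
          by_contra hpz
          exact absurd (bump_supp _ e₁ hpz) (not_lt.mpr (hA z hz))
      have hTdisj := hG.disjT _ _ hdisj
      have hsmall : 1/((φ j : ℝ)+1) < r := by
        have hφj : (N₀ : ℝ) ≤ (φ j : ℝ) := by
          exact_mod_cast (hj.trans (hφ.le_apply))
        rw [div_lt_iff₀ (by positivity)]
        have h1r : 1/r < (N₀ : ℝ) := hN₀
        rw [div_lt_iff₀ hr] at h1r
        nlinarith
      have := hball (y' j) ((hy'2 j).trans hsmall)
      rcases hTdisj (y' j) with h0 | h0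
      · exact this h0
      · exact hy'1 j h0
    -- the even set
    set A : Set X := Set.range (fun i => a (2*i)) with hA
    have hAne : A.Nonempty := ⟨a 0, ⟨0, rfl⟩⟩
    have h8 : (0:ℝ) < θ/8 := by linarith
    have hsplit := cmul_split A (θ/8) (θ/4) (by linarith) (u 0)
    have hTsum : T (u 0) = T (cmul A (θ/8) (θ/4) (by linarith) (u 0)) +
        T (cmulc A (θ/8) (θ/4) (by linarith) (u 0)) := by
      rw [← hG.addT, ← hsplit]
    by_cases hcase : (T (cmul A (θ/8) (θ/4) (by linarith) (u 0))).1 y ≠ 0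
    · -- essential function supported near even points; contradiction at odd points
      obtain ⟨J, hJ⟩ := claimM _ hcase
      obtain ⟨z, hz1, hz2⟩ := hJ (2*J+1) (by omega)
      have hcf : Metric.infDist z A < θ/4 := by
        by_contra hcf'
        push_neg at hcf'
        apply hz1
        show cf A (θ/8) (θ/4) z • (u 0).1 z = 0
        rw [cf_eq_zero (by linarith) hcf', zero_smul]
      obtain ⟨w, hw1, hw2⟩ := (Metric.infDist_lt_iff hAne).mp hcf
      obtain ⟨i, rfl⟩ := hw1
      have hij : 2*J+1 ≠ 2*i := by omega
      have := hsepa (2*J+1) (2*i) (by omega)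
      have htri := dist_triangle (a (2*J+1)) z (a (2*i))
      rw [dist_comm (a (2*J+1)) z] at htri
      linarith
    · push_neg at hcase
      have hg' : (T (cmulc A (θ/8) (θ/4) (by linarith) (u 0))).1 y ≠ 0 := by
        intro h0
        apply hTuy 0
        have := congrArg (fun v => v.1 y) hTsum
        rw [this, cu_add_apply, hcase, h0, add_zero]
      obtain ⟨J, hJ⟩ := claimM _ hg'
      obtain ⟨z, hz1, hz2⟩ := hJ (2*J) (by omega)
      apply hz1
      show (1 - cf A (θ/8) (θ/4) z) • (u 0).1 z = 0
      have : Metric.infDist z A ≤ θ/8 := by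
        refine le_trans (Metric.infDist_le_dist_of_mem ⟨J, rfl⟩) ?_
        exact hz2.le
      rw [cf_eq_one (by linarith) this]
      simp


/-- values of CuSpace functions are nonzero on a neighborhood -/
lemma nz_nbhd {Z E' : Type*} [MetricSpace Z] [NormedAddCommGroup E'] {W : CuSpace Z E'} {z : Z}
    (h : W.1 z ≠ 0) : ∃ r > (0:ℝ), ∀ z', dist z' z < r → W.1 z' ≠ 0 := by
  have hopen : IsOpen ((fun z' => W.1 z') ⁻¹' ({0}ᶜ)) :=
    IsOpen.preimage W.1.continuous isOpen_compl_singleton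
  obtain ⟨r, hr, hball⟩ := Metric.isOpen_iff.mp hopen z h
  exact ⟨r, hr, fun z' hz' => hball (Metric.mem_ball.mpr hz')⟩

/-- the support-point relation -/
def SuppAt (T : CuSpace X E → CuSpace Y F) (y : Y) (x : X) : Prop :=
  ∀ ρ > (0:ℝ), ∃ g : CuSpace X E, (T g).1 y ≠ 0 ∧ ∀ z, g.1 z ≠ 0 → dist z x < ρ

lemma ess_not_disj (hG : Good T S) {g g' : CuSpace X E} {y : Y}
    (h : (T g).1 y ≠ 0) (h' : (T g').1 y ≠ 0) : ∃ z, g.1 z ≠ 0 ∧ g'.1 z ≠ 0 := by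
  by_contra hc
  push_neg at hc
  have hd : Disj g g' := by
    intro z
    by_cases hz : g.1 z = 0
    · exact Or.inl hz
    · exact Or.inr (hc z hz)
  rcases hG.disjT _ _ hd y with h0 | h0
  · exact h h0
  · exact h' h0

lemma suppAt_unique (hG : Good T S) {y : Y} {x x' : X}
    (h : SuppAt T y x) (h' : SuppAt T y x') : x = x' := by
  rw [← dist_le_zero (x := x)]
  by_contra hc
  push_neg at hc
  obtain ⟨g, hg, hgs⟩ := h (dist x x' / 4) (by linarith)
  obtain ⟨g', hg', hgs'⟩ := h' (dist x x' / 4) (by linarith)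
  obtain ⟨z, hz, hz'⟩ := ess_not_disj hG hg hg'
  have h1 := hgs z hz
  have h2 := hgs' z hz'
  have := dist_triangle x z x'
  rw [dist_comm x z] at this
  linarith

variable [CompleteSpace X] [Nontrivial E] [Nontrivial F]

lemma exists_suppAt (hG : Good T S) (y : Y) : ∃ x, SuppAt T y x := by
  have hss : ∀ n : ℕ, ∃ (g : CuSpace X E) (x₀ : X), (T g).1 y ≠ 0 ∧
      ∀ x, g.1 x ≠ 0 → dist x x₀ < 1/(n+1) :=
    fun n => small_ess hG y (1/(n+1)) (by positivity)
  choose g c hg hc using hss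
  have hcauchy : CauchySeq c := by
    rw [Metric.cauchySeq_iff]
    intro ε hε
    obtain ⟨N, hN⟩ := exists_nat_gt (2/ε)
    refine ⟨N, fun m hm n hn => ?_⟩
    obtain ⟨z, hz1, hz2⟩ := ess_not_disj hG (hg m) (hg n)
    have h1 := hc m z hz1
    have h2 := hc n z hz2
    have hm1 : 1/((m:ℝ)+1) ≤ 1/((N:ℝ)+1) := by
      apply div_le_div_of_nonneg_left one_pos.le (by positivity)
      exact_mod_cast by omega
    have hn1 : 1/((n:ℝ)+1) ≤ 1/((N:ℝ)+1) := by
      apply div_le_div_of_nonneg_left one_pos.le (by positivity)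
      exact_mod_cast by omega
    have hN' : 2/ε < (N:ℝ) := hN
    have hNpos : (0:ℝ) < (N:ℝ)+1 := by positivity
    have h2N : 1/((N:ℝ)+1) < ε/2 := by
      rw [div_lt_iff₀ hNpos]
      rw [div_lt_iff₀ hε] at hN'
      nlinarith
    have := dist_triangle (c m) z (c n)
    rw [dist_comm (c m) z] at this
    linarith
  obtain ⟨x, hx⟩ := cauchySeq_tendsto_of_complete hcauchy
  refine ⟨x, fun ρ hρ => ?_⟩
  rw [Metric.tendsto_atTop] at hx
  obtain ⟨N₁, hN₁⟩ := hx (ρ/3) (by linarith)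
  obtain ⟨N₂, hN₂⟩ := exists_nat_gt (3/ρ)
  set n := max N₁ N₂ with hn
  refine ⟨g n, hg n, fun z hz => ?_⟩
  have h1 := hc n z hz
  have h2 := hN₁ n (le_max_left _ _)
  have h3 : 1/((n:ℝ)+1) < ρ/3 := by
    have hle : (N₂:ℝ) ≤ (n:ℝ) := by exact_mod_cast le_max_right N₁ N₂
    have hN' : 3/ρ < (N₂:ℝ) := hN₂
    rw [div_lt_iff₀ (by positivity)]
    rw [div_lt_iff₀ hρ] at hN'
    nlinarith
  have := dist_triangle z (c n) x
  linarith

variable (T) in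
/-- the support map -/
noncomputable def supp [Nonempty X] : Y → X := fun y => Classical.epsilon (SuppAt T y)

lemma supp_spec [Nonempty X] (hG : Good T S) (y : Y) : SuppAt T y (supp T y) :=
  Classical.epsilon_spec (exists_suppAt hG y)

/-- functions vanishing near the support point are killed at `y` -/
lemma supp_zero [Nonempty X] (hG : Good T S) {y : Y} {g : CuSpace X E} {ρ : ℝ} (hρ : 0 < ρ)
    (h : ∀ z, dist z (supp T y) < ρ → g.1 z = 0) : (T g).1 y = 0 := by
  obtain ⟨g', hg', hgs'⟩ := supp_spec hG y ρ hρ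
  have hd : Disj g g' := by
    intro z
    by_cases hz : g'.1 z = 0
    · exact Or.inr hz
    · exact Or.inl (h z (hgs' z hz))
  by_contra hc
  rcases hG.disjT _ _ hd y with h0 | h0
  · exact hc h0
  · exact hg' h0

/-- essential functions have cozero points arbitrarily near the support point -/
lemma supp_touch [Nonempty X] (hG : Good T S) {y : Y} {g : CuSpace X E}
    (hg : (T g).1 y ≠ 0) {ρ : ℝ} (hρ : 0 < ρ) :
    ∃ z, g.1 z ≠ 0 ∧ dist z (supp T y) < ρ := by
  by_contra hc
  push_neg at hc
  exact hg (supp_zero hG hρ (fun z hz => by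
    by_contra hgz
    exact absurd hz (not_lt.mpr (hc z hgz))))

/-- sequential continuity of the support map -/
lemma supp_seq_cont [Nonempty X] (hG : Good T S) {ys : ℕ → Y} {yl : Y}
    (h : Filter.Tendsto ys Filter.atTop (nhds yl)) :
    Filter.Tendsto (fun n => supp T (ys n)) Filter.atTop (nhds (supp T yl)) := by
  rw [Metric.tendsto_atTop] at h ⊢
  intro ε hε
  obtain ⟨g, hg, hgs⟩ := supp_spec hG yl (ε/3) (by linarith)
  obtain ⟨r, hr, hball⟩ := nz_nbhd hg
  obtain ⟨N, hN⟩ := h r hr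
  refine ⟨N, fun n hn => ?_⟩
  have hgn : (T g).1 (ys n) ≠ 0 := hball _ (hN n hn)
  obtain ⟨z, hz1, hz2⟩ := supp_touch hG hgn (by linarith : (0:ℝ) < ε/3)
  have h1 := hgs z hz1
  have := dist_triangle (supp T (ys n)) z (supp T yl)
  rw [dist_comm (supp T (ys n)) z] at this
  linarith


lemma one_div_succ_le {n N : ℕ} (h : N ≤ n) : (1:ℝ)/((n:ℝ)+1) ≤ 1/((N:ℝ)+1) := by
  apply div_le_div_of_nonneg_left one_pos.le (by positivity)
  exact_mod_cast by omega

lemma one_div_succ_lt {r : ℝ} (hr : 0 < r) {n N : ℕ} (hN : 1/r < (N:ℝ)) (h : N ≤ n) :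
    (1:ℝ)/((n:ℝ)+1) < r := by
  have h1 : (N:ℝ) ≤ (n:ℝ) := by exact_mod_cast h
  rw [div_lt_iff₀ (by positivity)]
  rw [div_lt_iff₀ hr] at hN
  nlinarith

variable [CompleteSpace Y] [Nonempty X] [Nonempty Y]

/-- the two support maps are mutually inverse -/
lemma supp_supp (hG : Good T S) (y : Y) : supp S (supp T y) = y := by
  obtain ⟨e₂, he₂⟩ : ∃ e : F, e ≠ 0 := exists_ne 0
  set x := supp T y with hx
  by_contra hne
  have hd0 : 0 < dist (supp S x) y := dist_pos.mpr hne
  set τ := dist (supp S x) y / 3 with hτ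
  have hτ0 : 0 < τ := by rw [hτ]; linarith
  obtain ⟨q', hq'1, hq'2⟩ := supp_spec hG.symm x τ hτ0
  set q : CuSpace Y F := bump y τ hτ0 e₂ with hq
  have hdisj : Disj q q' := by
    intro z
    by_cases h1 : q.1 z = 0
    · exact Or.inl h1
    by_cases h2 : q'.1 z = 0
    · exact Or.inr h2
    exfalso
    have hz1 : dist z y < τ := bump_supp hτ0 e₂ h1
    have hz2 : dist z (supp S x) < τ := hq'2 z h2
    have := dist_triangle (supp S x) z y
    rw [dist_comm (supp S x) z] at this
    rw [hτ] at hz1 hz2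
    linarith
  have hSdisj := hG.disjS _ _ hdisj
  have hTu : (T (S q)).1 y ≠ 0 := by
    rw [hG.TS]
    rw [show q.1 y = e₂ from bump_self hτ0 e₂]
    exact he₂
  obtain ⟨ρ₀, hρ₀, hball⟩ := nz_nbhd hq'1
  obtain ⟨z, hz1, hz2⟩ := supp_touch hG hTu hρ₀
  rcases hSdisj z with h0 | h0
  · exact hz1 h0
  · exact hball z hz2 h0

/-- MAIN: the support map is uniformly continuous -/
theorem supp_uc (hG : Good T S) : UniformContinuous (supp T) := by
  obtain ⟨e₂, he₂⟩ : ∃ e : F, e ≠ 0 := exists_ne 0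
  by_contra hUC
  rw [Metric.uniformContinuous_iff] at hUC
  push_neg at hUC
  obtain ⟨ε, hε, hbad⟩ := hUC
  have h0 : ∀ n : ℕ, ∃ ab : Y × Y, dist ab.1 ab.2 < 1/((n:ℝ)+1) ∧
      ε ≤ dist (supp T ab.1) (supp T ab.2) := by
    intro n
    obtain ⟨a, b, hab1, hab2⟩ := hbad (1/((n:ℝ)+1)) (by positivity)
    exact ⟨(a, b), hab1, hab2⟩
  choose ab hab1 hab2 using h0
  -- helper : the convergent-subsequence contradiction
  have conv_contra : ∀ (z1 z2 : ℕ → Y) (xl : X),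
      (∀ n, dist (z1 n) (z2 n) < 1/((n:ℝ)+1)) →
      (∀ n, ε ≤ dist (supp T (z1 n)) (supp T (z2 n))) →
      Filter.Tendsto (fun n => supp T (z1 n)) Filter.atTop (nhds xl) → False := by
    intro z1 z2 xl hz12 hzd hconv
    have hz1l : Filter.Tendsto z1 Filter.atTop (nhds (supp S xl)) := by
      have := supp_seq_cont hG.symm hconv
      have heq : (fun n => supp S (supp T (z1 n))) = z1 := by
        funext n; exact supp_supp hG (z1 n)
      rwa [heq] at this
    have hz2l : Filter.Tendsto z2 Filter.atTop (nhds (supp S xl)) := by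
      rw [Metric.tendsto_atTop] at hz1l ⊢
      intro δ hδ
      obtain ⟨N₁, hN₁⟩ := hz1l (δ/2) (by linarith)
      obtain ⟨N₂, hN₂⟩ := exists_nat_gt (2/δ)
      refine ⟨max N₁ N₂, fun n hn => ?_⟩
      have h1 := hN₁ n (le_trans (le_max_left _ _) hn)
      have h2 := hz12 n
      have h3 : (1:ℝ)/((n:ℝ)+1) < δ/2 :=
        one_div_succ_lt (by linarith) (by rw [one_div_div]; exact_mod_cast hN₂)
          (le_trans (le_max_right _ _) hn)
      have := dist_triangle (z2 n) (z1 n) (supp S xl)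
      rw [dist_comm (z2 n) (z1 n)] at this
      linarith
    have hc1 : Filter.Tendsto (fun n => supp T (z2 n)) Filter.atTop
        (nhds (supp T (supp S xl))) := supp_seq_cont hG hz2l
    rw [supp_supp hG.symm xl] at hc1
    rw [Metric.tendsto_atTop] at hconv hc1
    obtain ⟨N₁, hN₁⟩ := hconv (ε/3) (by linarith)
    obtain ⟨N₂, hN₂⟩ := hc1 (ε/3) (by linarith)
    set n := max N₁ N₂
    have h1 := hN₁ n (le_max_left _ _)
    have h2 := hN₂ n (le_max_right _ _)
    have h3 := hzd n
    have := dist_triangle (supp T (z1 n)) xl (supp T (z2 n))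
    rw [dist_comm xl (supp T (z2 n))] at this
    linarith
  -- Step 1 : separate (supp T ∘ y1)
  obtain ⟨xl, φ, hφ, hconv⟩ | ⟨α₁, hα₁, φ₁, hφ₁, hsep1⟩ :=
    seq_dichotomy (fun n => supp T (ab n).1)
  · exact conv_contra (fun n => (ab (φ n)).1) (fun n => (ab (φ n)).2) xl
      (fun n => lt_of_lt_of_le (hab1 (φ n)) (one_div_succ_le hφ.le_apply))
      (fun n => hab2 (φ n)) hconv
  set b1 : ℕ → Y := fun n => (ab (φ₁ n)).1 with hb1
  set b2 : ℕ → Y := fun n => (ab (φ₁ n)).2 with hb2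
  have hB1 : ∀ n, dist (b1 n) (b2 n) < 1/((n:ℝ)+1) :=
    fun n => lt_of_lt_of_le (hab1 (φ₁ n)) (one_div_succ_le hφ₁.le_apply)
  have hB2 : ∀ n, ε ≤ dist (supp T (b1 n)) (supp T (b2 n)) := fun n => hab2 (φ₁ n)
  have hB3 : ∀ i j, i ≠ j → α₁ ≤ dist (supp T (b1 i)) (supp T (b1 j)) := hsep1
  -- Step 2 : separate (supp T ∘ y2)
  obtain ⟨xl, φ, hφ, hconv⟩ | ⟨α₂, hα₂, φ₂, hφ₂, hsep2⟩ :=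
    seq_dichotomy (fun n => supp T (b2 n))
  · refine conv_contra (fun n => b2 (φ n)) (fun n => b1 (φ n)) xl
      (fun n => ?_) (fun n => ?_) hconv
    · rw [dist_comm]
      exact lt_of_lt_of_le (hB1 (φ n)) (one_div_succ_le hφ.le_apply)
    · rw [dist_comm]; exact hB2 (φ n)
  set c1 : ℕ → Y := fun n => b1 (φ₂ n) with hc1
  set c2 : ℕ → Y := fun n => b2 (φ₂ n) with hc2
  have hC1 : ∀ n, dist (c1 n) (c2 n) < 1/((n:ℝ)+1) :=
    fun n => lt_of_lt_of_le (hB1 (φ₂ n)) (one_div_succ_le hφ₂.le_apply)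
  have hC2 : ∀ n, ε ≤ dist (supp T (c1 n)) (supp T (c2 n)) := fun n => hB2 (φ₂ n)
  have hC3 : ∀ i j, i ≠ j → min α₁ α₂ ≤ dist (supp T (c1 i)) (supp T (c1 j)) :=
    fun i j hij => le_trans (min_le_left _ _)
      (hB3 (φ₂ i) (φ₂ j) (fun hc => hij (hφ₂.injective hc)))
  have hC4 : ∀ i j, i ≠ j → min α₁ α₂ ≤ dist (supp T (c2 i)) (supp T (c2 j)) :=
    fun i j hij => le_trans (min_le_right _ _) (hsep2 i j hij)
  -- Step 3 : cross thinning
  obtain ⟨φ₃, hφ₃, hcross⟩ := cross_thin (fun n => supp T (c1 n)) (fun n => supp T (c2 n))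
    (min α₁ α₂) hC3 hC4
  set y1 : ℕ → Y := fun n => c1 (φ₃ n) with hy1
  set y2 : ℕ → Y := fun n => c2 (φ₃ n) with hy2
  set Δ : ℝ := min (min α₁ α₂ / 2) ε with hΔdef
  have hΔ : 0 < Δ := lt_min (by positivity) hε
  have hD1 : ∀ n, dist (y1 n) (y2 n) < 1/((n:ℝ)+1) :=
    fun n => lt_of_lt_of_le (hC1 (φ₃ n)) (one_div_succ_le hφ₃.le_apply)
  have hD2 : ∀ i j, Δ ≤ dist (supp T (y1 i)) (supp T (y2 j)) := by
    intro i j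
    rcases eq_or_ne i j with rfl | hij
    · exact le_trans (min_le_right _ _) (hC2 (φ₃ i))
    · exact le_trans (min_le_left _ _) (hcross i j hij)
  -- Step 4 : the contradiction
  set cW : CuSpace Y F := mk' (fun _ => e₂) ‖e₂‖ (fun _ => le_refl _)
    uniformContinuous_const with hcW
  set u : CuSpace X E := S cW with hu
  have hTu : T u = cW := hG.TS cW
  set Hs : Set X := Set.range (fun n => supp T (y1 n)) with hHs
  have hHne : Hs.Nonempty := Set.range_nonempty _
  have h84 : Δ/8 < Δ/4 := by linarith
  set G : CuSpace X E := cmul Hs (Δ/8) (Δ/4) h84 u with hGdef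
  set G' : CuSpace X E := cmulc Hs (Δ/8) (Δ/4) h84 u with hG'def
  have hTsum : T u = T G + T G' := by
    rw [← hG.addT, ← cmul_split]
  have hi : ∀ n, (T G').1 (y1 n) = 0 := by
    intro n
    apply supp_zero hG (ρ := Δ/8) (by linarith)
    intro z hz
    show (1 - cf Hs (Δ/8) (Δ/4) z) • u.1 z = 0
    rw [cf_eq_one h84 (le_trans (Metric.infDist_le_dist_of_mem (Set.mem_range_self n)) hz.le)]
    simp
  have hii : ∀ n, (T G).1 (y1 n) = e₂ := by
    intro n
    have := congrArg (fun v => v.1 (y1 n)) hTsum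
    rw [cu_add_apply, hi n, add_zero] at this
    rw [← this, hTu]
    rfl
  have hiii : ∀ n, (T G).1 (y2 n) = 0 := by
    intro n
    apply supp_zero hG (ρ := Δ/2) (by linarith)
    intro z hz
    show cf Hs (Δ/8) (Δ/4) z • u.1 z = 0
    have hfar : Δ/4 ≤ Metric.infDist z Hs := by
      by_contra hcl
      push_neg at hcl
      obtain ⟨w, hw1, hw2⟩ := (Metric.infDist_lt_iff hHne).mp hcl
      obtain ⟨m, rfl⟩ := hw1
      have := hD2 m n
      have htri := dist_triangle (supp T (y1 m)) z (supp T (y2 n))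
      rw [dist_comm (supp T (y1 m)) z] at htri
      linarith
    rw [cf_eq_zero h84 hfar, zero_smul]
  have hTGuc := (T G).2
  rw [Metric.uniformContinuous_iff] at hTGuc
  obtain ⟨δ, hδ, hTG⟩ := hTGuc ‖e₂‖ (norm_pos_iff.mpr he₂)
  obtain ⟨N, hN⟩ := exists_nat_gt (1/δ)
  have h1 := hTG (lt_trans (hD1 N) (one_div_succ_lt hδ hN (le_refl N)))
  rw [hii N, hiii N, dist_eq_norm, sub_zero] at h1
  exact lt_irrefl _ h1


end Main
end Stmt6

open Stmt6 in
/-- If `X`, `Y` are complete metric spaces, `E`, `F` nontrivial real normed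
spaces, and there exists a biseparating map `T : C*ᵤ(X,E) → C*ᵤ(Y,F)`, then `X` and `Y` are
uniformly homeomorphic. -/
theorem stmt_6 {X Y E F : Type*}
    [MetricSpace X] [CompleteSpace X] [MetricSpace Y] [CompleteSpace Y]
    [NormedAddCommGroup E] [NormedSpace ℝ E] [Nontrivial E]
    [NormedAddCommGroup F] [NormedSpace ℝ F] [Nontrivial F]
    (T : CuSpace X E → CuSpace Y F)
    (hbij : Function.Bijective T)
    (hadd : ∀ f g : CuSpace X E, T (f + g) = T f + T g)
    (hsep : ∀ f g : CuSpace X E,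
      (∀ x, ‖f.1 x‖ * ‖g.1 x‖ = 0) → ∀ y, ‖(T f).1 y‖ * ‖(T g).1 y‖ = 0)
    (hsep' : ∀ f g : CuSpace X E,
      (∀ y, ‖(T f).1 y‖ * ‖(T g).1 y‖ = 0) → ∀ x, ‖f.1 x‖ * ‖g.1 x‖ = 0) :
    ∃ h : Y ≃ₜ X, UniformContinuous h ∧ UniformContinuous h.symm := by
  classical
  obtain ⟨e₁, he₁⟩ : ∃ e : E, e ≠ 0 := exists_ne 0
  obtain ⟨e₂, he₂⟩ : ∃ e : F, e ≠ 0 := exists_ne 0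
  set Teq : CuSpace X E ≃ CuSpace Y F := Equiv.ofBijective T hbij with hTeq
  set S : CuSpace Y F → CuSpace X E := fun p => Teq.symm p with hS
  have hST : ∀ f, S (T f) = f := fun f => Teq.symm_apply_apply f
  have hTS : ∀ p, T (S p) = p := fun p => Teq.apply_symm_apply p
  have haddS : ∀ p q, S (p + q) = S p + S q := by
    intro p q
    apply hbij.1
    rw [hTS, hadd, hTS, hTS]
  have hdisjT : ∀ f g, Disj f g → Disj (T f) (T g) := by
    intro f g hd y
    have := hsep f g (fun x => by
      rcases hd x with h | h
      · rw [h]; simp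
      · rw [h]; simp) y
    rcases mul_eq_zero.mp this with h | h
    · exact Or.inl (norm_eq_zero.mp h)
    · exact Or.inr (norm_eq_zero.mp h)
  have hdisjS : ∀ p q, Disj p q → Disj (S p) (S q) := by
    intro p q hd x
    have := hsep' (S p) (S q) (fun y => by
      rw [hTS, hTS]
      rcases hd y with h | h
      · rw [h]; simp
      · rw [h]; simp) x
    rcases mul_eq_zero.mp this with h | h
    · exact Or.inl (norm_eq_zero.mp h)
    · exact Or.inr (norm_eq_zero.mp h)
  have hG : Good T S := ⟨hST, hTS, hadd, haddS, hdisjT, hdisjS⟩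
  rcases isEmpty_or_nonempty X with hX | hX
  · rcases isEmpty_or_nonempty Y with hY | hY
    · -- both empty
      have hcY : Continuous (Equiv.equivOfIsEmpty Y X) :=
        continuous_iff_continuousAt.mpr (fun y => (IsEmpty.false y).elim)
      have hcX : Continuous (Equiv.equivOfIsEmpty Y X).symm :=
        continuous_iff_continuousAt.mpr (fun x => (IsEmpty.false x).elim)
      refine ⟨⟨Equiv.equivOfIsEmpty Y X, hcY, hcX⟩, ?_, ?_⟩
      · exact Metric.uniformContinuous_iff.mpr
          (fun ε hε => ⟨1, one_pos, fun {a b} _ => (IsEmpty.false a).elim⟩)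
      · exact Metric.uniformContinuous_iff.mpr
          (fun ε hε => ⟨1, one_pos, fun {a b} _ => (IsEmpty.false a).elim⟩)
    · -- X empty, Y nonempty : impossible
      exfalso
      obtain ⟨y₀⟩ := hY
      set p : CuSpace Y F := mk' (fun _ => e₂) ‖e₂‖ (fun _ => le_refl _)
        uniformContinuous_const with hp
      set q : CuSpace Y F := mk' (fun _ => (0:F)) ‖e₂‖
        (fun _ => by simp [norm_nonneg]) uniformContinuous_const with hq0
      have hSpq : S p = S q := cu_ext (fun x => (IsEmpty.false x).elim)
      have : p = q := by rw [← hTS p, ← hTS q, hSpq]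
      have := congrArg (fun v => v.1 y₀) this
      simp only [hp, hq0, mk'_apply] at this
      exact he₂ this
  rcases isEmpty_or_nonempty Y with hY | hY
  · -- Y empty, X nonempty : impossible
    exfalso
    obtain ⟨x₀⟩ := hX
    set p : CuSpace X E := mk' (fun _ => e₁) ‖e₁‖ (fun _ => le_refl _)
      uniformContinuous_const with hp
    set q : CuSpace X E := mk' (fun _ => (0:E)) ‖e₁‖
      (fun _ => by simp [norm_nonneg]) uniformContinuous_const with hq0
    have hTpq : T p = T q := cu_ext (fun y => (IsEmpty.false y).elim)
    have : p = q := hbij.1 hTpq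
    have := congrArg (fun v => v.1 x₀) this
    simp only [hp, hq0, mk'_apply] at this
    exact he₁ this
  -- main case
  have hUC : UniformContinuous (supp T) := supp_uc hG
  have kUC : UniformContinuous (supp S) := supp_uc hG.symm
  refine ⟨⟨⟨supp T, supp S, supp_supp hG, supp_supp hG.symm⟩,
    hUC.continuous, kUC.continuous⟩, hUC, kUC⟩
end

section
/- Let X and Y be Tychonoff (completely regular Hausdorff) spaces and let E and F be nontrivial real normed vector spaces. If there exists a biseparating map T : C(X,E) → C(Y,F), then the realcompactifications υX and υY are homeomorphic. -/
open OnePoint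

/-- The realcompactification `υX` of a Tychonoff space `X`, realized as the subspace of
`StoneCech X` of points where the extension of every real-valued continuous function
(composed with the embedding `ℝ ↪ OnePoint ℝ`) is finite. -/
def upsilonSet (X : Type*) [TopologicalSpace X] : Set (StoneCech X) :=
  {p | ∀ g : C(X, ℝ),
    stoneCechExtend (OnePoint.continuous_coe.comp g.continuous) p ≠ (∞ : OnePoint ℝ)}

namespace Stmt8

open Set Function Topology Filter

set_option linter.unusedSectionVars false

noncomputable section

variable {X Y E F : Type*}

/-- The cozero set of a continuous map. -/
def coz [TopologicalSpace X] [NormedAddCommGroup E] (f : C(X, E)) : Set X := {x | f x ≠ 0}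

theorem isInducing_unit [TopologicalSpace X] [T35Space X] :
    IsInducing (stoneCechUnit : X → StoneCech X) := by
  rw [isInducing_iff_nhds]
  intro x
  refine le_antisymm ((continuous_stoneCechUnit.tendsto x).le_comap) ?_
  intro s hs
  rcases mem_nhds_iff.1 hs with ⟨U, hUs, hUo, hxU⟩
  obtain ⟨f, hfc, hfx, hfK⟩ :=
    CompletelyRegularSpace.completely_regular x Uᶜ hUo.isClosed_compl (by simpa)
  refine mem_comap.2 ⟨stoneCechExtend hfc ⁻¹' {t | (t : ℝ) < 1/2}, ?_, ?_⟩
  · apply IsOpen.mem_nhds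
    · exact (isOpen_Iio.preimage continuous_subtype_val).preimage (continuous_stoneCechExtend hfc)
    · have : stoneCechExtend hfc (stoneCechUnit x) = f x := congrFun (stoneCechExtend_extends hfc) x
      simp only [mem_preimage, mem_setOf_eq, this, hfx]
      norm_num
  · intro x' hx'
    apply hUs
    by_contra hxU'
    have h1 : f x' = 1 := hfK hxU'
    have h2 : stoneCechExtend hfc (stoneCechUnit x') = f x' := congrFun (stoneCechExtend_extends hfc) x'
    simp only [mem_preimage, mem_setOf_eq, h2, h1] at hx'
    norm_num at hx'

theorem closure_of_extend_infty [TopologicalSpace X] (g : C(X, ℝ)) {q : StoneCech X}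
    (hq : stoneCechExtend (OnePoint.continuous_coe.comp g.continuous) q = (∞ : OnePoint ℝ))
    (N : ℕ) : q ∈ closure (stoneCechUnit '' {x | (N : ℝ) ≤ |g x|}) := by
  by_contra hmem
  set A := {x | (N:ℝ) ≤ |g x|} with hA
  set O := (closure (stoneCechUnit '' A))ᶜ with hO
  have hOo : IsOpen O := isClosed_closure.isOpen_compl
  have hd : q ∈ closure (O ∩ range stoneCechUnit) :=
    (denseRange_stoneCechUnit.open_subset_closure_inter hOo) hmem
  set G := stoneCechExtend (OnePoint.continuous_coe.comp g.continuous) with hG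
  have himg : G '' (O ∩ range stoneCechUnit) ⊆ (fun r : ℝ => (r : OnePoint ℝ)) '' (Icc (-(N:ℝ)) N) := by
    rintro _ ⟨p, ⟨hpO, x, rfl⟩, rfl⟩
    have hx : x ∉ A := fun hxA => hpO (subset_closure (mem_image_of_mem _ hxA))
    have hval : G (stoneCechUnit x) = ((g x : ℝ) : OnePoint ℝ) :=
      congrFun (stoneCechExtend_extends _) x
    rw [hval]
    have : |g x| < N := by simpa [hA] using hx
    exact mem_image_of_mem _ ⟨by linarith [(abs_lt.1 this).1], by linarith [(abs_lt.1 this).2]⟩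
  have hcl : G q ∈ closure ((fun r : ℝ => (r : OnePoint ℝ)) '' (Icc (-(N:ℝ)) N)) := by
    have h1 : G q ∈ G '' closure (O ∩ range stoneCechUnit) := mem_image_of_mem _ hd
    have h2 := image_closure_subset_closure_image (f := G) (continuous_stoneCechExtend _)
      (s := O ∩ range stoneCechUnit)
    exact closure_mono himg (h2 h1)
  have hclosed : IsClosed ((fun r : ℝ => (r : OnePoint ℝ)) '' (Icc (-(N:ℝ)) N)) :=
    ((isCompact_Icc).image OnePoint.continuous_coe).isClosed
  rw [hclosed.closure_eq, hq] at hcl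
  rcases hcl with ⟨r, _, hr⟩
  exact OnePoint.coe_ne_infty r hr

/-! ### hat functions -/

def hat (n : ℕ) (t : ℝ) : ℝ := max 0 (1 - |t - n|)

theorem hat_continuous (n : ℕ) : Continuous (hat n) := by unfold hat; fun_prop

theorem hat_nonneg (n : ℕ) (t : ℝ) : 0 ≤ hat n t := le_max_left _ _

theorem hat_eq_zero {n : ℕ} {t : ℝ} (h : 1 ≤ |t - n|) : hat n t = 0 := by
  unfold hat; rw [max_eq_left]; linarith

theorem hat_ne_zero {n : ℕ} {t : ℝ} (h : hat n t ≠ 0) : |t - n| < 1 := by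
  by_contra h'
  exact h (hat_eq_zero (not_lt.1 h'))

theorem hat_pos {n : ℕ} {t : ℝ} (h : |t - n| < 1) : 0 < hat n t := by
  unfold hat; rw [max_eq_right] <;> linarith [abs_nonneg (t - (n:ℝ))]

theorem hat_trio {n : ℕ} {t : ℝ} (h : |t - (n + 1 : ℕ)| < 1) :
    hat n t + hat (n + 1) t + hat (n + 2) t = 1 := by
  have h' := abs_lt.1 (by push_cast at h ⊢; exact h)
  unfold hat
  push_cast
  rcases le_total t ((n:ℝ) + 1) with hc | hc
  · rw [abs_of_nonneg (by linarith : (0:ℝ) ≤ t - n),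
      abs_of_nonpos (by linarith : t - ((n:ℝ)+1) ≤ 0),
      abs_of_nonpos (by linarith : t - ((n:ℝ)+2) ≤ 0),
      max_eq_right (by linarith), max_eq_right (by linarith), max_eq_left (by linarith)]
    ring
  · rw [abs_of_nonneg (by linarith : (0:ℝ) ≤ t - n),
      abs_of_nonneg (by linarith : (0:ℝ) ≤ t - ((n:ℝ)+1)),
      abs_of_nonpos (by linarith : t - ((n:ℝ)+2) ≤ 0),
      max_eq_left (by linarith), max_eq_right (by linarith), max_eq_right (by linarith)]
    ring

theorem hat_floor {t : ℝ} (h : 0 ≤ t) : hat ⌊t⌋₊ t ≠ 0 := by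
  refine ne_of_gt (hat_pos ?_)
  rw [abs_of_nonneg (sub_nonneg.2 (Nat.floor_le h))]
  linarith [Nat.lt_floor_add_one t]

theorem hat_floor_ge (t : ℝ) : t - 1 < (⌊t⌋₊ : ℝ) := Nat.sub_one_lt_floor t

theorem locallyFinite_hat [TopologicalSpace X] {G : X → ℝ} (hG : Continuous G)
    {M : Type*} [NormedAddCommGroup M] (A : ℕ → X → M)
    (hA : ∀ n x, hat n (G x) = 0 → A n x = 0) :
    LocallyFinite fun n => support (A n) := by
  intro x₀
  refine ⟨G ⁻¹' Iio (G x₀ + 1), (isOpen_Iio.preimage hG).mem_nhds (by simp), ?_⟩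
  apply Set.Finite.subset (Set.finite_Iio (⌊G x₀⌋₊ + 3))
  rintro n ⟨x, hx1, hx2⟩
  have h1 : hat n (G x) ≠ 0 := fun h0 => hx1 (hA n x h0)
  have h2 : |G x - n| < 1 := hat_ne_zero h1
  have h3 : (n : ℝ) < G x + 1 := by linarith [(abs_lt.1 h2).1]
  have h4 : G x < G x₀ + 1 := hx2
  have h5 : G x₀ ≤ (⌊G x₀⌋₊ : ℝ) + 1 := by
    rcases le_or_gt 0 (G x₀) with h | h
    · exact (Nat.lt_floor_add_one _).le
    · linarith [Nat.cast_nonneg (α := ℝ) ⌊G x₀⌋₊]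
  have : (n : ℝ) < (⌊G x₀⌋₊ : ℝ) + 3 := by linarith
  exact_mod_cast this

/-! ### the pair structure -/

section pair

variable [TopologicalSpace X] [TopologicalSpace Y]
  [NormedAddCommGroup E] [NormedSpace ℝ E]
  [NormedAddCommGroup F] [NormedSpace ℝ F]

/-- A pair of mutually inverse additive biseparating maps. -/
structure Pair (T : C(X, E) → C(Y, F)) (S : C(Y, F) → C(X, E)) : Prop where
  st : ∀ f, S (T f) = f
  ts : ∀ u, T (S u) = u
  addT : ∀ f g, T (f + g) = T f + T g
  sepT : ∀ f g : C(X, E), (∀ x, ‖f x‖ * ‖g x‖ = 0) → ∀ y, ‖T f y‖ * ‖T g y‖ = 0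
  sepS : ∀ u v : C(Y, F), (∀ y, ‖u y‖ * ‖v y‖ = 0) → ∀ x, ‖S u x‖ * ‖S v x‖ = 0

variable {T : C(X, E) → C(Y, F)} {S : C(Y, F) → C(X, E)}

theorem Pair.addS (hP : Pair T S) (u v : C(Y, F)) : S (u + v) = S u + S v := by
  have : T (S u + S v) = u + v := by rw [hP.addT, hP.ts, hP.ts]
  rw [← this, hP.st]

theorem Pair.symm (hP : Pair T S) : Pair S T :=
  ⟨hP.ts, hP.st, hP.addS, hP.sepS, hP.sepT⟩

theorem Pair.mapT_zero (hP : Pair T S) : T 0 = 0 := by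
  have h := hP.addT 0 0
  rw [add_zero] at h
  have h2 : T 0 + T 0 = T 0 + 0 := by rw [← h, add_zero]
  exact add_left_cancel h2

theorem Pair.mapT_sum (hP : Pair T S) {ι : Type*} [DecidableEq ι] (s : Finset ι)
    (f : ι → C(X, E)) : T (∑ i ∈ s, f i) = ∑ i ∈ s, T (f i) := by
  induction s using Finset.induction_on with
  | empty => simpa using hP.mapT_zero
  | insert _ _ h ih => rw [Finset.sum_insert h, hP.addT, ih, Finset.sum_insert h]

theorem Pair.mapT_nsmul (hP : Pair T S) (n : ℕ) (f : C(X, E)) : T (n • f) = n • T f := by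
  induction n with
  | zero => simpa using hP.mapT_zero
  | succ n ih => rw [succ_nsmul, succ_nsmul, hP.addT, ih]

/-- Pointwise reformulation of separation. -/
theorem Pair.sep_pt (hP : Pair T S) {f g : C(X, E)} (h : ∀ x, f x = 0 ∨ g x = 0) {y : Y}
    (hy : T f y ≠ 0) : T g y = 0 := by
  have := hP.sepT f g (fun x => by rcases h x with h' | h' <;> simp [h']) y
  rcases mul_eq_zero.1 this with h' | h'
  · exact absurd (norm_eq_zero.1 h') hy
  · exact norm_eq_zero.1 h'

/-- Multiplication of `h` by the `n`-th hat function of `|g|`. -/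
def hpiece (g : C(X, ℝ)) (n : ℕ) (h : C(X, E)) : C(X, E) :=
  ⟨fun x => hat n (|g x|) • h x,
    ((hat_continuous n).comp g.continuous.abs).smul h.continuous⟩

theorem hpiece_apply (g : C(X, ℝ)) (n : ℕ) (h : C(X, E)) (x : X) :
    hpiece g n h x = hat n (|g x|) • h x := rfl

theorem Pair.mapT_natCast_smul (hP : Pair T S) (k : ℕ) (f : C(X, E)) :
    T ((k : ℝ) • f) = (k : ℝ) • T f := by
  rw [Nat.cast_smul_eq_nsmul, Nat.cast_smul_eq_nsmul]
  exact hP.mapT_nsmul k f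

/-! ### support points -/

/-- `p` is a support candidate for `y`. -/
def SuppCand (T : C(X, E) → C(Y, F)) (y : Y) (p : StoneCech X) : Prop :=
  ∀ U : Set (StoneCech X), IsOpen U → p ∈ U →
    ∃ f : C(X, E), coz f ⊆ stoneCechUnit ⁻¹' U ∧ T f y ≠ 0

theorem suppCand_exists (hP : Pair T S) [Nontrivial F] (y : Y) : ∃ p, SuppCand T y p := by
  classical
  by_contra hno
  push_neg at hno
  have hno' : ∀ p : StoneCech X, ∃ U : Set (StoneCech X), IsOpen U ∧ p ∈ U ∧
      ∀ f : C(X, E), coz f ⊆ stoneCechUnit ⁻¹' U → T f y = 0 := by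
    intro p
    have h := hno p
    unfold SuppCand at h
    push_neg at h
    obtain ⟨U, hUo, hpU, hU⟩ := h
    exact ⟨U, hUo, hpU, hU⟩
  choose U hUo hpU hU using hno'
  obtain ⟨s, hs⟩ := isCompact_univ.elim_finite_subcover U hUo
    (fun p _ => mem_iUnion.2 ⟨p, hpU p⟩)
  -- partition of unity subordinate to U restricted to s
  obtain ⟨ρ, hρ⟩ := PartitionOfUnity.exists_isSubordinate (ι := ↥s)
    (isClosed_univ : IsClosed (univ : Set (StoneCech X))) (fun i => U i.val) (fun i => hUo i.val)
    (by
      intro z _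
      rcases mem_iUnion₂.1 (hs (mem_univ z)) with ⟨p, hps, hpz⟩
      exact mem_iUnion.2 ⟨⟨p, hps⟩, hpz⟩)
  obtain ⟨vF, hvF⟩ := exists_ne (0 : F)
  set f₀ : C(X, E) := S (ContinuousMap.const Y vF) with hf₀
  set piece : ↥s → C(X, E) := fun i =>
    ⟨fun x => ρ i (stoneCechUnit x) • f₀ x,
      (((ρ i).continuous.comp continuous_stoneCechUnit).smul f₀.continuous)⟩ with hpiece
  have hdecomp : (∑ i, piece i) = f₀ := by
    ext x
    have h2 : ∑ i, ρ i (stoneCechUnit x) = 1 := by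
      rw [← finsum_eq_sum_of_fintype]
      exact ρ.sum_eq_one (mem_univ _)
    calc (∑ i, piece i) x = ∑ i, ρ i (stoneCechUnit x) • f₀ x := by
          rw [ContinuousMap.sum_apply]; rfl
      _ = (∑ i, ρ i (stoneCechUnit x)) • f₀ x := by rw [Finset.sum_smul]
      _ = f₀ x := by rw [h2, one_smul]
  have hval : T f₀ y = vF := by rw [hf₀, hP.ts]; rfl
  have hzero : ∀ i : ↥s, T (piece i) y = 0 := by
    intro i
    apply hU i.val
    intro x hx
    have hρx : ρ i (stoneCechUnit x) ≠ 0 := by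
      intro h0
      apply hx
      show ρ i (stoneCechUnit x) • f₀ x = 0
      rw [h0, zero_smul]
    exact hρ i (subset_closure (by exact hρx))
  have : T f₀ y = 0 := by
    rw [← hdecomp, hP.mapT_sum]
    rw [ContinuousMap.sum_apply]
    exact Finset.sum_eq_zero fun i _ => hzero i
  rw [hval] at this
  exact hvF this

theorem suppCand_unique (hP : Pair T S) {y : Y} {p q : StoneCech X}
    (hp : SuppCand T y p) (hq : SuppCand T y q) : p = q := by
  by_contra hne
  obtain ⟨U, V, hUo, hVo, hpU, hqV, hUV⟩ := t2_separation hne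
  obtain ⟨f, hfU, hfy⟩ := hp U hUo hpU
  obtain ⟨f', hfV, hfy'⟩ := hq V hVo hqV
  have hdisj : ∀ x, f x = 0 ∨ f' x = 0 := by
    intro x
    by_contra hx
    push_neg at hx
    exact (hUV.ne_of_mem (hfU hx.1) (hfV hx.2)) rfl
  exact hfy' (hP.sep_pt hdisj hfy)

variable [Nontrivial F]

/-- The support point of `y` in `βX`. -/
def suppPt (hP : Pair T S) (y : Y) : StoneCech X := (suppCand_exists hP y).choose

theorem suppPt_spec (hP : Pair T S) (y : Y) : SuppCand T y (suppPt hP y) :=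
  (suppCand_exists hP y).choose_spec

/-- Functions vanishing near the support point are annihilated at `y`. -/
theorem vanish (hP : Pair T S) {y : Y} {U : Set (StoneCech X)} (hU : IsOpen U)
    (hqU : suppPt hP y ∈ U) {f : C(X, E)} (hf : ∀ x, stoneCechUnit x ∈ U → f x = 0) :
    T f y = 0 := by
  classical
  have hcand := suppPt_spec hP y
  have hnc : ∀ p : ↥(Uᶜ), ∃ V : Set (StoneCech X), IsOpen V ∧ p.val ∈ V ∧
      ∀ f' : C(X, E), coz f' ⊆ stoneCechUnit ⁻¹' V → T f' y = 0 := by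
    rintro ⟨p, hp⟩
    have hne : ¬ SuppCand T y p := fun hc => hp (suppCand_unique hP hc hcand ▸ hqU)
    unfold SuppCand at hne
    push_neg at hne
    obtain ⟨V, hVo, hpV, hV⟩ := hne
    exact ⟨V, hVo, hpV, hV⟩
  choose V hVo hpV hV using hnc
  have hKc : IsCompact (Uᶜ) := hU.isClosed_compl.isCompact
  obtain ⟨s, hs⟩ := hKc.elim_finite_subcover V hVo
    (fun p hp => mem_iUnion.2 ⟨⟨p, hp⟩, hpV _⟩)
  set W : Option ↥s → Set (StoneCech X) := fun o => o.elim U (fun i => V i.val) with hW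
  have hWo : ∀ o, IsOpen (W o) := by rintro (_ | i); exacts [hU, hVo i.val]
  obtain ⟨ρ, hρ⟩ := PartitionOfUnity.exists_isSubordinate (ι := Option ↥s)
    (isClosed_univ : IsClosed (univ : Set (StoneCech X))) W hWo
    (by
      intro z _
      by_cases hz : z ∈ U
      · exact mem_iUnion.2 ⟨none, hz⟩
      · rcases mem_iUnion₂.1 (hs hz) with ⟨i, his, hiz⟩
        exact mem_iUnion.2 ⟨Option.some ⟨i, his⟩, hiz⟩)
  set piece : Option ↥s → C(X, E) := fun o =>
    ⟨fun x => ρ o (stoneCechUnit x) • f x,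
      (((ρ o).continuous.comp continuous_stoneCechUnit).smul f.continuous)⟩ with hpiece
  have hdecomp : (∑ o, piece o) = f := by
    ext x
    have h2 : ∑ o, ρ o (stoneCechUnit x) = 1 := by
      rw [← finsum_eq_sum_of_fintype]
      exact ρ.sum_eq_one (mem_univ _)
    calc (∑ o, piece o) x = ∑ o, ρ o (stoneCechUnit x) • f x := by
          rw [ContinuousMap.sum_apply]; rfl
      _ = (∑ o, ρ o (stoneCechUnit x)) • f x := by rw [Finset.sum_smul]
      _ = f x := by rw [h2, one_smul]
  have hnone : piece none = 0 := by
    ext x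
    show ρ none (stoneCechUnit x) • f x = 0
    by_cases hρx : ρ none (stoneCechUnit x) = 0
    · rw [hρx, zero_smul]
    · rw [hf x (hρ none (subset_closure hρx)), smul_zero]
  have hzero : ∀ o, T (piece o) y = 0 := by
    rintro (_ | i)
    · rw [hnone, hP.mapT_zero]; rfl
    · apply hV i
      intro x hx
      have hρx : ρ (Option.some i) (stoneCechUnit x) ≠ 0 := by
        intro h0
        apply hx
        show ρ (Option.some i) (stoneCechUnit x) • f x = 0
        rw [h0, zero_smul]
      exact hρ (Option.some i) (subset_closure hρx)
  calc T f y = T (∑ o, piece o) y := by rw [hdecomp]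
    _ = (∑ o, T (piece o)) y := by rw [hP.mapT_sum]
    _ = ∑ o, T (piece o) y := by rw [ContinuousMap.sum_apply]
    _ = 0 := Finset.sum_eq_zero fun o _ => hzero o

/-- The fundamental lemma. -/
theorem suppPt_mem_closure_coz (hP : Pair T S) {f : C(X, E)} {y : Y} (h : T f y ≠ 0) :
    suppPt hP y ∈ closure (stoneCechUnit '' coz f) := by
  by_contra hm
  apply h
  apply vanish hP isClosed_closure.isOpen_compl hm
  intro x hx
  by_contra hfx
  exact hx (subset_closure (mem_image_of_mem _ hfx))

theorem continuous_suppPt (hP : Pair T S) : Continuous (suppPt hP) := by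
  rw [continuous_iff_continuousAt]
  intro y
  apply (nhds_basis_opens (suppPt hP y)).tendsto_right_iff.2
  rintro U ⟨hqU, hUo⟩
  -- find V open with q ∈ V, closure V ⊆ U
  obtain ⟨C, ⟨hCnb, hCc⟩, hCU⟩ := ((closed_nhds_basis (suppPt hP y)).mem_iff).1 (hUo.mem_nhds hqU)
  set V := interior C with hVdef
  have hqV : suppPt hP y ∈ V := mem_interior_iff_mem_nhds.2 hCnb
  have hVU : closure V ⊆ U := le_trans (by
      rw [← hCc.closure_eq]
      exact closure_mono interior_subset) hCU
  obtain ⟨f, hfV, hfy⟩ := suppPt_spec hP y V isOpen_interior hqV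
  have hopen : IsOpen {y' : Y | T f y' ≠ 0} :=
    isOpen_compl_singleton.preimage (T f).continuous
  filter_upwards [hopen.mem_nhds hfy] with y' hy'
  have := suppPt_mem_closure_coz hP hy'
  apply hVU
  apply closure_mono _ this
  exact (image_mono hfV).trans (image_preimage_subset _ _)

/-- The canonical extension `βY → βX` of the support map. -/
def hatMap (hP : Pair T S) : StoneCech Y → StoneCech X :=
  stoneCechExtend (continuous_suppPt hP)

theorem continuous_hatMap (hP : Pair T S) : Continuous (hatMap hP) :=
  continuous_stoneCechExtend _

theorem hatMap_unit (hP : Pair T S) (y : Y) : hatMap hP (stoneCechUnit y) = suppPt hP y :=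
  congrFun (stoneCechExtend_extends (continuous_suppPt hP)) y

end pair

section pair2

variable [TopologicalSpace X] [TopologicalSpace Y]
  [NormedAddCommGroup E] [NormedSpace ℝ E]
  [NormedAddCommGroup F] [NormedSpace ℝ F]
  {T : C(X, E) → C(Y, F)} {S : C(Y, F) → C(X, E)}
  [Nontrivial E] [Nontrivial F]

theorem hatMap_symm_suppPt (hP : Pair T S) (y : Y) :
    hatMap hP.symm (suppPt hP y) = stoneCechUnit y := by
  by_contra hne
  set q' := hatMap hP.symm (suppPt hP y) with hq'
  obtain ⟨V, W₀, hVo, hW₀o, hq'V, hyW₀, hVW₀⟩ := t2_separation hne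
  obtain ⟨C, ⟨hCnb, hCc⟩, hCW₀⟩ :=
    ((closed_nhds_basis (stoneCechUnit y)).mem_iff).1 (hW₀o.mem_nhds hyW₀)
  set W := interior C with hWdef
  have hyW : stoneCechUnit y ∈ W := mem_interior_iff_mem_nhds.2 hCnb
  have hclW : closure W ⊆ W₀ :=
    (by rw [← hCc.closure_eq]; exact closure_mono interior_subset : closure W ⊆ C).trans hCW₀
  have hq'W : q' ∉ closure W := fun hq => (hVW₀.ne_of_mem hq'V (hclW hq)) rfl
  obtain ⟨Φ, hΦ0, hΦ1, _⟩ := exists_continuous_zero_one_of_isClosed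
    (isOpen_interior.isClosed_compl) (isClosed_singleton (x := stoneCechUnit y))
    (by rw [disjoint_singleton_right]; simpa using hyW)
  obtain ⟨vF, hvF⟩ := exists_ne (0 : F)
  set u : C(Y, F) := ⟨fun y' => Φ (stoneCechUnit y') • vF,
    (Φ.continuous.comp continuous_stoneCechUnit).smul continuous_const⟩ with hudef
  have hcozu : coz u ⊆ stoneCechUnit ⁻¹' W := by
    intro y' hy'
    by_contra hW'
    apply hy'
    show Φ (stoneCechUnit y') • vF = 0
    have : Φ (stoneCechUnit y') = 0 := hΦ0 hW'
    rw [this, zero_smul]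
  have huy' : T (S u) y ≠ 0 := by
    rw [hP.ts]
    show Φ (stoneCechUnit y) • vF ≠ 0
    have : Φ (stoneCechUnit y) = 1 := hΦ1 rfl
    rw [this, one_smul]
    exact hvF
  have h1 : suppPt hP y ∈ closure (stoneCechUnit '' coz (S u)) := suppPt_mem_closure_coz hP huy'
  have h2 : ∀ x ∈ coz (S u), suppPt hP.symm x ∈ closure (stoneCechUnit '' coz u) := by
    intro x hx
    have hx' : S u x ≠ 0 := hx
    exact suppPt_mem_closure_coz hP.symm hx'
  have h3 : q' ∈ closure (stoneCechUnit '' coz u) := by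
    have hmem : q' ∈ hatMap hP.symm '' closure (stoneCechUnit '' coz (S u)) :=
      mem_image_of_mem _ h1
    have h4 := image_closure_subset_closure_image (continuous_hatMap hP.symm)
      (s := stoneCechUnit '' coz (S u)) hmem
    have h5 : hatMap hP.symm '' (stoneCechUnit '' coz (S u)) ⊆
        closure (stoneCechUnit '' coz u) := by
      rintro _ ⟨_, ⟨x, hx, rfl⟩, rfl⟩
      rw [hatMap_unit]
      exact h2 x hx
    exact closure_minimal h5 isClosed_closure h4
  apply hq'W
  refine closure_mono ?_ h3
  exact (image_mono hcozu).trans (image_preimage_subset _ _)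

theorem hatMap_symm_comp (hP : Pair T S) (p : StoneCech Y) :
    hatMap hP.symm (hatMap hP p) = p := by
  have h : (hatMap hP.symm ∘ hatMap hP) = id := by
    apply Continuous.ext_on denseRange_stoneCechUnit
      ((continuous_hatMap hP.symm).comp (continuous_hatMap hP)) continuous_id
    rintro _ ⟨y, rfl⟩
    simp only [Function.comp_apply, id_eq, hatMap_unit]
    exact hatMap_symm_suppPt hP y
  exact congrFun h p

/-- The `★` lemma: near any point `y₀` of `Y`, the cozero sets of the images under `T`
of the hat-pieces of `g` eventually vanish. -/
theorem star_lemma (hP : Pair T S) (y₀ : Y) (g : C(X, ℝ)) (v : E) :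
    ∃ W : Set Y, IsOpen W ∧ y₀ ∈ W ∧ ∃ N : ℕ, ∀ n, N ≤ n → ∀ y ∈ W,
      T (hpiece g n (ContinuousMap.const X v)) y = 0 := by
  classical
  obtain ⟨vF, hvF⟩ := exists_ne (0 : F)
  set f' : C(X, E) := S (ContinuousMap.const Y vF) with hf'
  -- the four test functions
  set tm : ℕ → ℕ → X → E := fun j k x =>
    (if k % 4 = j then (k : ℝ) else 0) • (hpiece g k f' x) with htm
  have htmc : ∀ j k, Continuous (tm j k) := fun j k =>
    continuous_const.smul (hpiece g k f').continuous
  have htm0 : ∀ j k x, hat k (|g x|) = 0 → tm j k x = 0 := by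
    intro j k x h0
    simp [htm, hpiece_apply, h0]
  have hWcc : ∀ j, Continuous (fun x => ∑ᶠ k, tm j k x) := fun j =>
    continuous_finsum (htmc j) (locallyFinite_hat g.continuous.abs (tm j) (htm0 j))
  set Wc : ℕ → C(X, E) := fun j => ⟨fun x => ∑ᶠ k, tm j k x, hWcc j⟩ with hWcdef
  set M : ℝ := ‖T (Wc 0) y₀‖ + ‖T (Wc 1) y₀‖ + ‖T (Wc 2) y₀‖ + ‖T (Wc 3) y₀‖ with hM
  have hMj : ∀ j, j < 4 → ‖T (Wc j) y₀‖ ≤ M := by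
    intro j hj
    interval_cases j <;>
      (rw [hM];
       linarith [norm_nonneg (T (Wc 0) y₀), norm_nonneg (T (Wc 1) y₀),
         norm_nonneg (T (Wc 2) y₀), norm_nonneg (T (Wc 3) y₀)])
  set W : Set Y := ⋂ j : Fin 4, {y | ‖T (Wc j.val) y‖ < M + 1} with hWdef
  have hWo : IsOpen W := isOpen_iInter_of_finite
    (fun j => isOpen_lt ((T (Wc j.val)).continuous.norm) continuous_const)
  have hy₀W : y₀ ∈ W :=
    mem_iInter.2 fun j => lt_of_le_of_lt (hMj j.val j.isLt) (lt_add_one M)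
  have hvF' : (0:ℝ) < ‖vF‖ := norm_pos_iff.2 hvF
  refine ⟨W, hWo, hy₀W, ⌈(3 * (M + 1)) / ‖vF‖⌉₊ + 2, ?_⟩
  intro n hn y' hy'W
  by_contra hun
  obtain ⟨m, rfl⟩ : ∃ m, n = m + 1 := ⟨n - 1, by omega⟩
  -- trio decomposition of f'
  set s3 : C(X, E) := hpiece g m f' + hpiece g (m+1) f' + hpiece g (m+2) f' with hs3
  set rest : C(X, E) := f' - s3 with hrest
  have hrest0 : ∀ x, (hpiece g (m+1) (ContinuousMap.const X v)) x = 0 ∨ rest x = 0 := by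
    intro x
    by_cases h0 : hat (m+1) (|g x|) = 0
    · left
      show hat (m+1) (|g x|) • (ContinuousMap.const X v) x = 0
      rw [h0, zero_smul]
    · right
      have htr := hat_trio (n := m) (hat_ne_zero h0)
      show f' x - s3 x = 0
      have hs3x : s3 x = (hat m (|g x|) + hat (m+1) (|g x|) + hat (m+2) (|g x|)) • f' x := by
        rw [hs3]
        simp only [ContinuousMap.add_apply, hpiece_apply, add_smul]
      rw [hs3x, htr, one_smul, sub_self]
  have hTrest : T rest y' = 0 := hP.sep_pt hrest0 hun
  have hdec : s3 + rest = f' := by rw [hrest]; abel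
  have hT1 : T (s3 + rest) y' = T s3 y' + T rest y' := by rw [hP.addT]; rfl
  rw [hdec] at hT1
  have hT2 : T s3 y' = T (hpiece g m f') y' + T (hpiece g (m+1) f') y'
      + T (hpiece g (m+2) f') y' := by
    rw [hs3, hP.addT, hP.addT]
    rfl
  have hTf' : T f' y' = vF := by rw [hf', hP.ts]; rfl
  have hvFy : vF = T (hpiece g m f') y' + T (hpiece g (m+1) f') y'
      + T (hpiece g (m+2) f') y' := by
    rw [← hT2]
    rw [hTrest, add_zero] at hT1
    rw [← hT1, hTf']
  have htot : ‖vF‖ ≤ ‖T (hpiece g m f') y'‖ + ‖T (hpiece g (m+1) f') y'‖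
      + ‖T (hpiece g (m+2) f') y'‖ := by
    rw [hvFy]; exact norm_add₃_le
  have hex : ∃ k, (m ≤ k ∧ k ≤ m + 2) ∧ ‖vF‖ / 3 ≤ ‖T (hpiece g k f') y'‖ := by
    by_contra hcon
    push_neg at hcon
    have c1 := hcon m ⟨le_refl m, by omega⟩
    have c2 := hcon (m+1) ⟨by omega, by omega⟩
    have c3 := hcon (m+2) ⟨by omega, by omega⟩
    linarith
  obtain ⟨k, ⟨hkm, hkm2⟩, hkge⟩ := hex
  -- the test function of class `k % 4` localizes at `k`
  set restj : C(X, E) := Wc (k % 4) - (k : ℝ) • hpiece g k f' with hrestj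
  have hrestj0 : ∀ x, (hpiece g (m+1) (ContinuousMap.const X v)) x = 0 ∨ restj x = 0 := by
    intro x
    by_cases h0 : hat (m+1) (|g x|) = 0
    · left
      show hat (m+1) (|g x|) • (ContinuousMap.const X v) x = 0
      rw [h0, zero_smul]
    · right
      have hGx : |(|g x|) - ((m+1 : ℕ) : ℝ)| < 1 := hat_ne_zero h0
      have hsingle : ∑ᶠ k', tm (k % 4) k' x = tm (k % 4) k x := by
        apply finsum_eq_single
        intro k' hk'
        by_cases hmod : k' % 4 = k % 4
        · -- same residue, distinct: far apart
          have h4 : k' + 4 ≤ k ∨ k + 4 ≤ k' := by omega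
          have hkk : |(k : ℝ) - ((m+1 : ℕ) : ℝ)| ≤ 1 := by
            have h1 : (m : ℝ) ≤ (k : ℝ) := by exact_mod_cast hkm
            have h2 : (k : ℝ) ≤ (m : ℝ) + 2 := by exact_mod_cast hkm2
            rw [abs_le]
            push_cast
            constructor <;> linarith
          have habs := abs_lt.1 hGx
          have hfar : 1 ≤ |(|g x|) - (k' : ℝ)| := by
            rw [le_abs]
            rcases h4 with h | h
            · left
              have h1 : (k' : ℝ) + 4 ≤ (k : ℝ) := by exact_mod_cast h
              have h2 := abs_le.1 hkk
              push_cast at h2 habs ⊢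
              linarith [h2.1, habs.1]
            · right
              have h1 : (k : ℝ) + 4 ≤ (k' : ℝ) := by exact_mod_cast h
              have h2 := abs_le.1 hkk
              push_cast at h2 habs ⊢
              linarith [h2.2, habs.2]
          exact htm0 _ k' x (hat_eq_zero hfar)
        · simp [htm, hmod]
      show Wc (k % 4) x - ((k : ℝ) • hpiece g k f') x = 0
      have hWx : Wc (k % 4) x = ∑ᶠ k', tm (k % 4) k' x := rfl
      rw [hWx, hsingle]
      have : tm (k % 4) k x = ((k : ℝ) • hpiece g k f') x := by
        simp [htm]
      rw [this, sub_self]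
  have hTrestj : T restj y' = 0 := hP.sep_pt hrestj0 hun
  have hdecj : (k : ℝ) • hpiece g k f' + restj = Wc (k % 4) := by rw [hrestj]; abel
  have hTj : T (Wc (k % 4)) y' = (k : ℝ) • (T (hpiece g k f') y') := by
    have h1 : T ((k : ℝ) • hpiece g k f' + restj) y'
        = T ((k : ℝ) • hpiece g k f') y' + T restj y' := by rw [hP.addT]; rfl
    rw [hdecj] at h1
    rw [h1, hTrestj, add_zero, hP.mapT_natCast_smul]
    rfl
  have hnormj : ‖T (Wc (k % 4)) y'‖ = (k : ℝ) * ‖T (hpiece g k f') y'‖ := by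
    rw [hTj, norm_smul, Real.norm_eq_abs, Nat.abs_cast]
  have hy'j : ‖T (Wc (k % 4)) y'‖ < M + 1 :=
    mem_iInter.1 hy'W ⟨k % 4, Nat.mod_lt _ (by norm_num)⟩
  -- numerical contradiction
  have hmN : (⌈(3 * (M + 1)) / ‖vF‖⌉₊ + 1 : ℕ) ≤ m := by omega
  have hmR : (3 * (M + 1)) / ‖vF‖ + 1 ≤ (m : ℝ) := by
    have h1 := Nat.le_ceil ((3 * (M + 1)) / ‖vF‖)
    have h2 : ((⌈(3 * (M + 1)) / ‖vF‖⌉₊ + 1 : ℕ) : ℝ) ≤ (m : ℝ) := by exact_mod_cast hmN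
    push_cast at h2
    linarith
  have hmk : (m : ℝ) ≤ (k : ℝ) := by exact_mod_cast hkm
  have hMlt : M + 1 < (m : ℝ) * (‖vF‖ / 3) := by
    have h3 : 3 * (M + 1) / ‖vF‖ * ‖vF‖ = 3 * (M + 1) :=
      div_mul_cancel₀ _ (ne_of_gt hvF')
    have h4 : (3 * (M + 1) / ‖vF‖ + 1) * ‖vF‖ ≤ (m : ℝ) * ‖vF‖ :=
      mul_le_mul_of_nonneg_right hmR hvF'.le
    rw [add_mul, h3, one_mul] at h4
    have h5 : (m : ℝ) * (‖vF‖ / 3) = (m : ℝ) * ‖vF‖ / 3 := by ring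
    linarith
  have hfinal : (m : ℝ) * (‖vF‖ / 3) ≤ ‖T (Wc (k % 4)) y'‖ := by
    rw [hnormj]
    have h1 : (m : ℝ) * (‖vF‖ / 3) ≤ (k : ℝ) * (‖vF‖ / 3) :=
      mul_le_mul_of_nonneg_right hmk (by positivity)
    have h2 : (k : ℝ) * (‖vF‖ / 3) ≤ (k : ℝ) * ‖T (hpiece g k f') y'‖ :=
      mul_le_mul_of_nonneg_left hkge (Nat.cast_nonneg k)
    linarith
  linarith

/-- The main lemma: support points of actual points of `Y` lie in `υX`. -/
theorem suppPt_mem_upsilon [T35Space X] [T35Space Y] (hP : Pair T S) (y₀ : Y) :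
    suppPt hP y₀ ∈ upsilonSet X := by
  intro g hq
  obtain ⟨v, hv⟩ := exists_ne (0 : E)
  obtain ⟨W, hWo, hy₀W, N, hW⟩ := star_lemma hP y₀ g v
  set EN : Set Y := ⋃ n ∈ Ici N, coz (T (hpiece g n (ContinuousMap.const X v))) with hEN
  have h1 : suppPt hP y₀ ∈ closure (stoneCechUnit '' {x | ((N+1 : ℕ) : ℝ) ≤ |g x|}) :=
    closure_of_extend_infty g hq (N+1)
  have h2 : {x | ((N+1 : ℕ) : ℝ) ≤ |g x|} ⊆
      ⋃ n ∈ Ici N, coz (hpiece g n (ContinuousMap.const X v)) := by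
    intro x hx
    have hx' : ((N+1 : ℕ) : ℝ) ≤ |g x| := hx
    have hx0 : (0:ℝ) ≤ |g x| := abs_nonneg _
    refine mem_iUnion₂.2 ⟨⌊|g x|⌋₊, ?_, ?_⟩
    · rw [mem_Ici]
      apply Nat.le_floor
      push_cast at hx' ⊢
      linarith
    · show (hpiece g ⌊|g x|⌋₊ (ContinuousMap.const X v)) x ≠ 0
      show hat ⌊|g x|⌋₊ (|g x|) • (ContinuousMap.const X v) x ≠ 0
      intro h0
      rcases smul_eq_zero.1 h0 with h | h
      · exact hat_floor hx0 h
      · exact hv h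
  have h3 : ∀ x, x ∈ ⋃ n ∈ Ici N, coz (hpiece g n (ContinuousMap.const X v)) →
      suppPt hP.symm x ∈ closure (stoneCechUnit '' EN) := by
    intro x hx
    rcases mem_iUnion₂.1 hx with ⟨n, hn, hxn⟩
    have hSx : S (T (hpiece g n (ContinuousMap.const X v))) x ≠ 0 := by
      rw [hP.st]; exact hxn
    have hfund := suppPt_mem_closure_coz hP.symm hSx
    refine closure_mono (image_mono ?_) hfund
    intro y hy
    exact mem_iUnion₂.2 ⟨n, hn, hy⟩
  have h4 : stoneCechUnit y₀ ∈ closure (stoneCechUnit '' EN) := by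
    have hq' : hatMap hP.symm (suppPt hP y₀) = stoneCechUnit y₀ := hatMap_symm_suppPt hP y₀
    have h5 : hatMap hP.symm (suppPt hP y₀) ∈
        closure (hatMap hP.symm '' (stoneCechUnit '' {x | ((N+1 : ℕ) : ℝ) ≤ |g x|})) :=
      image_closure_subset_closure_image (continuous_hatMap hP.symm) (mem_image_of_mem _ h1)
    rw [hq'] at h5
    have h6 : hatMap hP.symm '' (stoneCechUnit '' {x | ((N+1 : ℕ) : ℝ) ≤ |g x|}) ⊆
        closure (stoneCechUnit '' EN) := by
      rintro _ ⟨_, ⟨x, hx, rfl⟩, rfl⟩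
      rw [hatMap_unit]
      exact h3 x (h2 hx)
    exact closure_minimal h6 isClosed_closure h5
  have h7 : y₀ ∈ closure EN := by
    rw [(isInducing_unit (X := Y)).closure_eq_preimage_closure_image EN]
    exact h4
  rcases mem_closure_iff.1 h7 W hWo hy₀W with ⟨y', hy'W, hy'EN⟩
  rcases mem_iUnion₂.1 hy'EN with ⟨n, hn, hy'n⟩
  exact hy'n (hW n hn y' hy'W)

theorem hatMap_mem_upsilon [T35Space X] [T35Space Y] (hP : Pair T S) {p : StoneCech Y}
    (hp : p ∈ upsilonSet Y) : hatMap hP p ∈ upsilonSet X := by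
  intro g
  set G2 : StoneCech Y → OnePoint ℝ :=
    (stoneCechExtend (OnePoint.continuous_coe.comp g.continuous)) ∘ hatMap hP with hG2
  have hG2c : Continuous G2 := (continuous_stoneCechExtend _).comp (continuous_hatMap hP)
  have hfin : ∀ y : Y, G2 (stoneCechUnit y) ≠ ∞ := by
    intro y
    show (stoneCechExtend _) (hatMap hP (stoneCechUnit y)) ≠ ∞
    rw [hatMap_unit]
    exact suppPt_mem_upsilon hP y g
  choose w hw using fun y => (OnePoint.ne_infty_iff_exists.1 (hfin y))
  have hwc : Continuous w := by
    apply (OnePoint.isOpenEmbedding_coe.isEmbedding.continuous_iff).2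
    exact (hG2c.comp continuous_stoneCechUnit).congr (fun y => (hw y).symm)
  set wc : C(Y, ℝ) := ⟨w, hwc⟩ with hwcdef
  have hext : stoneCechExtend (OnePoint.continuous_coe.comp wc.continuous) = G2 := by
    apply stoneCech_hom_ext (continuous_stoneCechExtend _) hG2c
    funext y
    simp only [Function.comp_apply]
    have h0 : stoneCechExtend (OnePoint.continuous_coe.comp wc.continuous) (stoneCechUnit y)
        = ((w y : ℝ) : OnePoint ℝ) := congrFun (stoneCechExtend_extends _) y
    rw [h0]
    exact hw y
  have hne := hp wc
  rw [hext] at hne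
  exact hne

end pair2

end

end Stmt8

/-- If `X`, `Y` are Tychonoff spaces, `E`, `F` nontrivial real normed spaces,
and there exists a biseparating map `T : C(X,E) → C(Y,F)`, then the realcompactifications
`υX` and `υY` are homeomorphic. -/
theorem stmt_8 {X Y E F : Type*}
    [TopologicalSpace X] [T35Space X] [TopologicalSpace Y] [T35Space Y]
    [NormedAddCommGroup E] [NormedSpace ℝ E] [Nontrivial E]
    [NormedAddCommGroup F] [NormedSpace ℝ F] [Nontrivial F]
    (T : C(X, E) → C(Y, F))
    (hbij : Function.Bijective T)
    (hadd : ∀ f g : C(X, E), T (f + g) = T f + T g)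
    (hsep : ∀ f g : C(X, E), (∀ x, ‖f x‖ * ‖g x‖ = 0) → ∀ y, ‖T f y‖ * ‖T g y‖ = 0)
    (hsep' : ∀ f g : C(X, E), (∀ y, ‖T f y‖ * ‖T g y‖ = 0) → ∀ x, ‖f x‖ * ‖g x‖ = 0) :
    Nonempty (upsilonSet X ≃ₜ upsilonSet Y) := by
  classical
  set S : C(Y, F) → C(X, E) := Function.invFun T with hS
  have hst : ∀ f, S (T f) = f := fun f => hbij.injective (Function.invFun_eq ⟨f, rfl⟩)
  have hts : ∀ u, T (S u) = u := fun u => Function.invFun_eq (hbij.surjective u)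
  have hP : Stmt8.Pair T S := by
    refine ⟨hst, hts, hadd, hsep, ?_⟩
    intro u v h x
    have := hsep' (S u) (S v) (by simpa [hts] using h) x
    exact this
  refine ⟨Homeomorph.mk (Equiv.mk
    (fun p => ⟨Stmt8.hatMap hP.symm p.val, Stmt8.hatMap_mem_upsilon hP.symm p.prop⟩)
    (fun p => ⟨Stmt8.hatMap hP p.val, Stmt8.hatMap_mem_upsilon hP p.prop⟩)
    ?_ ?_) ?_ ?_⟩
  · intro p
    apply Subtype.ext
    exact Stmt8.hatMap_symm_comp hP.symm p.val
  · intro p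
    apply Subtype.ext
    exact Stmt8.hatMap_symm_comp hP p.val
  · exact ((Stmt8.continuous_hatMap hP.symm).comp continuous_subtype_val).subtype_mk _
  · exact ((Stmt8.continuous_hatMap hP).comp continuous_subtype_val).subtype_mk _
end
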